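/- arXiv:2008.00268 — 2 statements merged into one kernel-verified Lean document; each statement's English description precedes it below -/
import Mathlib

section
/- If T is a balanced tree and E is a subtree of T, then there exists a strong subtree S of T such that E ⊆ S and L_T(E) = L_T(S). -/
open scoped Classical

section AbstractTrees

variable {α : Type*} [PartialOrder α]

/-- The set of strict predecessors of `t` inside `U`. -/
def predsIn (U : Set α) (t : α) : Set α := {s ∈ U | s < t}

/-- The level of a node `t` in the tree `U`: the number of its strict predecessors in `U`. -/
noncomputable def levelIn (U : Set α) (t : α) : ℕ := (predsIn U t).ncard

/-- `U` is a tree: the set of strict predecessors of every node is finite and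
linearly ordered. -/
def IsTreeOn (U : Set α) : Prop :=
  ∀ t ∈ U, (predsIn U t).Finite ∧
    ∀ s₁ ∈ predsIn U t, ∀ s₂ ∈ predsIn U t, s₁ ≤ s₂ ∨ s₂ ≤ s₁

/-- The height of the tree `U`: the least `n` such that `U` has no node of level `n`
(equivalently, for trees, the supremum of `level + 1`), or `ω = ⊤` if there is no such `n`. -/
noncomputable def heightIn (U : Set α) : ℕ∞ :=
  ⨆ t ∈ U, ((levelIn U t : ℕ∞) + 1)

/-- The level set `L_U(D)` of `D` in `U`. -/
def levelSetIn (U D : Set α) : Set ℕ := levelIn U '' D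

/-- `t` is a maximal node of `U`. -/
def IsMaximalIn (U : Set α) (t : α) : Prop := t ∈ U ∧ ∀ s ∈ U, ¬ t < s

/-- `U` is rooted: it has a unique minimal element below all of its nodes. -/
def IsRootedIn (U : Set α) : Prop := ∃ r ∈ U, ∀ t ∈ U, r ≤ t

/-- `U` is balanced: either it has infinite height and no maximal nodes, or all its
maximal nodes lie on level `h(U) - 1`. -/
def IsBalanced (U : Set α) : Prop :=
  (heightIn U = ⊤ ∧ ∀ t, ¬ IsMaximalIn U t) ∨
  (heightIn U ≠ ⊤ ∧ ∀ t, IsMaximalIn U t → ((levelIn U t : ℕ∞) + 1 = heightIn U))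

/-- `m` is the meet `s ∧_U t` of `s` and `t` in `U`. -/
def IsMeetIn (U : Set α) (s t m : α) : Prop :=
  m ∈ U ∧ m ≤ s ∧ m ≤ t ∧ ∀ m' ∈ U, m' ≤ s → m' ≤ t → m' ≤ m

/-- `S` is a subtree of `U`: a subset closed under binary meets (taken in `U`). -/
def IsSubtreeOf (U S : Set α) : Prop :=
  S ⊆ U ∧ ∀ s ∈ S, ∀ t ∈ S, ∃ m ∈ S, IsMeetIn U s t m

/-- `t` is an immediate successor of `s` in `U`. -/
def IsImmSuccIn (U : Set α) (s t : α) : Prop :=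
  s ∈ U ∧ t ∈ U ∧ s < t ∧ ∀ u ∈ U, s < u → ¬ u < t

/-- `U` is finitely branching. -/
def IsFinBranching (U : Set α) : Prop :=
  ∀ t ∈ U, {s | IsImmSuccIn U t s}.Finite

/-- `S` is a strong subtree of `U`: it is a subtree which is either empty, or is
rooted, balanced, has each of its levels contained in a single level of `U`, and for every
non-maximal node `s ∈ S` and every immediate successor `t` of `s` in `U` there is exactly
one immediate successor of `s` in `S` above `t`. -/
def IsStrongSubtreeOf (U S : Set α) : Prop :=
  IsSubtreeOf U S ∧
  (S = ∅ ∨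
    (IsRootedIn S ∧ IsBalanced S ∧
      (∀ s ∈ S, ∀ t ∈ S, levelIn S s = levelIn S t → levelIn U s = levelIn U t) ∧
      (∀ s ∈ S, ¬ IsMaximalIn S s → ∀ t, IsImmSuccIn U s t →
        ∃! c, IsImmSuccIn S s c ∧ t ≤ c)))

end AbstractTrees

section Helpers
variable {α : Type*} [PartialOrder α] {U : Set α} {s t u r v : α}

lemma aux_predsIn_mono (h : s ≤ t) : predsIn U s ⊆ predsIn U t :=
  fun x hx => ⟨hx.1, lt_of_lt_of_le hx.2 h⟩

lemma aux_levelIn_mono (hfin : (predsIn U t).Finite) (h : s ≤ t) : levelIn U s ≤ levelIn U t :=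
  Set.ncard_le_ncard (aux_predsIn_mono h) hfin

lemma aux_levelIn_strict (hfin : (predsIn U t).Finite) (hs : s ∈ U) (h : s < t) :
    levelIn U s < levelIn U t := by
  have hsub : insert s (predsIn U s) ⊆ predsIn U t := by
    intro x hx
    rcases hx with rfl | hx
    · exact ⟨hs, h⟩
    · exact aux_predsIn_mono h.le hx
  have hfs : (predsIn U s).Finite := hfin.subset (aux_predsIn_mono h.le)
  have : (insert s (predsIn U s)).ncard = levelIn U s + 1 := by
    rw [Set.ncard_insert_of_notMem (fun hx => lt_irrefl s hx.2) hfs]; rfl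
  have hle := Set.ncard_le_ncard hsub hfin
  rw [this] at hle
  exact Nat.lt_of_succ_le hle

lemma aux_eq_of_le_level (hfin : (predsIn U t).Finite) (hs : s ∈ U) (h : s ≤ t)
    (hl : levelIn U t ≤ levelIn U s) : s = t := by
  rcases h.lt_or_eq with h' | h'
  · exact absurd hl (not_le.mpr (aux_levelIn_strict hfin hs h'))
  · exact h'

lemma aux_comparable (htree : IsTreeOn U) (ht : t ∈ U) (hs : s ∈ U) (hu : u ∈ U)
    (h1 : s ≤ t) (h2 : u ≤ t) : s ≤ u ∨ u ≤ s := by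
  rcases h1.lt_or_eq with h1' | rfl
  · rcases h2.lt_or_eq with h2' | rfl
    · exact (htree t ht).2 s ⟨hs, h1'⟩ u ⟨hu, h2'⟩
    · exact Or.inl h1'.le
  · exact Or.inr h2

lemma aux_chain_min (C : Set α) (hfin : C.Finite) (hne : C.Nonempty)
    (hch : ∀ x ∈ C, ∀ y ∈ C, x ≤ y ∨ y ≤ x) : ∃ m ∈ C, ∀ x ∈ C, m ≤ x := by
  obtain ⟨m, hm, hmin⟩ := Set.Finite.exists_minimalFor id C hfin hne
  refine ⟨m, hm, fun x hx => ?_⟩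
  rcases hch m hm x hx with h | h
  · exact h
  · exact hmin hx h

lemma aux_chain_max (C : Set α) (hfin : C.Finite) (hne : C.Nonempty)
    (hch : ∀ x ∈ C, ∀ y ∈ C, x ≤ y ∨ y ≤ x) : ∃ m ∈ C, ∀ x ∈ C, x ≤ m := by
  obtain ⟨m, hm, hmax⟩ := Set.Finite.exists_maximalFor id C hfin hne
  refine ⟨m, hm, fun x hx => ?_⟩
  rcases hch m hm x hx with h | h
  · exact hmax hx h
  · exact h

lemma aux_exists_parent (htree : IsTreeOn U) (ht : t ∈ U) (h : 0 < levelIn U t) :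
    ∃ p ∈ U, p < t ∧ levelIn U p + 1 = levelIn U t := by
  have hfin := (htree t ht).1
  have hne : (predsIn U t).Nonempty := by
    rw [← Set.ncard_pos hfin] at *; exact h
  obtain ⟨p, hp, hmax⟩ := aux_chain_max _ hfin hne (htree t ht).2
  refine ⟨p, hp.1, hp.2, ?_⟩
  have heq : predsIn U t = insert p (predsIn U p) := by
    ext x
    constructor
    · intro hx
      rcases (hmax x hx).lt_or_eq with h' | h'
      · exact Or.inr ⟨hx.1, h'⟩
      · exact Or.inl h'
    · rintro (rfl | hx)
      · exact hp
      · exact aux_predsIn_mono hp.2.le hx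
  have hfp : (predsIn U p).Finite := hfin.subset (aux_predsIn_mono hp.2.le)
  simp only [levelIn]
  rw [heq, Set.ncard_insert_of_notMem (fun hx => lt_irrefl p hx.2) hfp]

lemma aux_exists_anc (htree : IsTreeOn U) (ht : t ∈ U) {n : ℕ} (h : n ≤ levelIn U t) :
    ∃ s ∈ U, s ≤ t ∧ levelIn U s = n := by
  obtain ⟨k, hk⟩ : ∃ k, levelIn U t = n + k := ⟨levelIn U t - n, by omega⟩
  clear h
  induction k generalizing t with
  | zero => exact ⟨t, ht, le_rfl, by omega⟩
  | succ k ih =>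
    obtain ⟨p, hp, hpt, hpl⟩ := aux_exists_parent htree ht (by omega)
    obtain ⟨s, hs, hst, hsl⟩ := ih hp (by omega)
    exact ⟨s, hs, hst.trans hpt.le, hsl⟩

lemma aux_level_lt_height (ht : t ∈ U) : (levelIn U t : ℕ∞) < heightIn U := by
  have h1 : ((levelIn U t : ℕ∞) + 1) ≤ heightIn U := le_iSup₂ (f := fun t _ => ((levelIn U t : ℕ∞) + 1)) t ht
  refine lt_of_lt_of_le ?_ h1
  exact (ENat.lt_add_one_iff (by simp)).mpr le_rfl

lemma aux_exists_gt (hbal : IsBalanced U) (ht : t ∈ U)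
    (h : (levelIn U t : ℕ∞) + 1 < heightIn U) : ∃ u ∈ U, t < u := by
  by_contra h'
  push_neg at h'
  have hmax : IsMaximalIn U t := ⟨ht, fun s hs => h' s hs⟩
  rcases hbal with ⟨_, hnm⟩ | ⟨_, hm⟩
  · exact hnm t hmax
  · rw [hm t hmax] at h; exact lt_irrefl _ h

lemma aux_exists_immsucc (htree : IsTreeOn U) (ht : t ∈ U) (hu : u ∈ U) (h : t < u) :
    ∃ v, IsImmSuccIn U t v ∧ v ≤ u := by
  set C : Set α := {v ∈ U | t < v ∧ v ≤ u} with hC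
  have hfin : C.Finite := by
    apply ((htree u hu).1.insert u).subset
    intro x hx
    rcases hx.2.2.lt_or_eq with h' | h'
    · exact Or.inr ⟨hx.1, h'⟩
    · exact Or.inl h'
  have hne : C.Nonempty := ⟨u, hu, h, le_rfl⟩
  have hch : ∀ x ∈ C, ∀ y ∈ C, x ≤ y ∨ y ≤ x := fun x hx y hy =>
    aux_comparable htree hu hx.1 hy.1 hx.2.2 hy.2.2
  obtain ⟨v, hv, hmin⟩ := aux_chain_min _ hfin hne hch
  refine ⟨v, ⟨ht, hv.1, hv.2.1, fun w hw htw hwv => ?_⟩, hv.2.2⟩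
  have : w ∈ C := ⟨hw, htw, hwv.le.trans hv.2.2⟩
  exact absurd (hmin w this) hwv.not_ge

lemma aux_immsucc_level (htree : IsTreeOn U) (h : IsImmSuccIn U t v) :
    levelIn U v = levelIn U t + 1 := by
  obtain ⟨ht, hv, htv, himm⟩ := h
  have hfin := (htree v hv).1
  have heq : predsIn U v = insert t (predsIn U t) := by
    ext x
    constructor
    · intro hx
      rcases aux_comparable htree hv ht hx.1 htv.le hx.2.le with h' | h'
      · rcases h'.lt_or_eq with h'' | h''
        · exact absurd hx.2 (himm x hx.1 h'')
        · exact Or.inl h''.symm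
      · rcases h'.lt_or_eq with h'' | h''
        · exact Or.inr ⟨hx.1, h''⟩
        · exact Or.inl h''
    · rintro (rfl | hx)
      · exact ⟨ht, htv⟩
      · exact aux_predsIn_mono htv.le hx
  simp only [levelIn]
  rw [heq, Set.ncard_insert_of_notMem (fun hx => lt_irrefl t hx.2)
    (hfin.subset (aux_predsIn_mono htv.le))]

lemma aux_immsucc_unique (htree : IsTreeOn U) {v₁ v₂ : α} (h₁ : IsImmSuccIn U t v₁)
    (h₂ : IsImmSuccIn U t v₂) (hu : u ∈ U) (l₁ : v₁ ≤ u) (l₂ : v₂ ≤ u) : v₁ = v₂ := by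
  rcases aux_comparable htree hu h₁.2.1 h₂.2.1 l₁ l₂ with h | h
  · rcases h.lt_or_eq with h' | h'
    · exact absurd h' (h₂.2.2.2 v₁ h₁.2.1 h₁.2.2.1)
    · exact h'
  · rcases h.lt_or_eq with h' | h'
    · exact absurd h' (h₁.2.2.2 v₂ h₂.2.1 h₂.2.2.1)
    · exact h'.symm

lemma aux_exists_meet (htree : IsTreeOn U) (hs : s ∈ U) (ht : t ∈ U) (hr : r ∈ U)
    (hr1 : r ≤ s) (hr2 : r ≤ t) : ∃ m, IsMeetIn U s t m := by
  set C : Set α := {x ∈ U | x ≤ s ∧ x ≤ t} with hC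
  have hfin : C.Finite := by
    apply ((htree s hs).1.insert s).subset
    intro x hx
    rcases hx.2.1.lt_or_eq with h' | h'
    · exact Or.inr ⟨hx.1, h'⟩
    · exact Or.inl h'
  have hne : C.Nonempty := ⟨r, hr, hr1, hr2⟩
  have hch : ∀ x ∈ C, ∀ y ∈ C, x ≤ y ∨ y ≤ x := fun x hx y hy =>
    aux_comparable htree hs hx.1 hy.1 hx.2.1 hy.2.1
  obtain ⟨m, hm, hmax⟩ := aux_chain_max _ hfin hne hch
  exact ⟨m, hm.1, hm.2.1, hm.2.2, fun m' hm' h1 h2 => hmax m' ⟨hm', h1, h2⟩⟩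

lemma aux_exists_above (htree : IsTreeOn U) (hbal : IsBalanced U) (ht : t ∈ U) {n : ℕ}
    (h1 : levelIn U t ≤ n) (h2 : (n : ℕ∞) < heightIn U) :
    ∃ s ∈ U, t ≤ s ∧ levelIn U s = n := by
  have main : ∀ k t, t ∈ U → levelIn U t ≤ n → n - levelIn U t ≤ k →
      ∃ s ∈ U, t ≤ s ∧ levelIn U s = n := by
    intro k
    induction k with
    | zero => intro t ht h1 hk; exact ⟨t, ht, le_rfl, by omega⟩
    | succ k ih =>
      intro t ht h1 hk
      rcases eq_or_lt_of_le h1 with h' | h'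
      · exact ⟨t, ht, le_rfl, h'⟩
      · have hlt : (levelIn U t : ℕ∞) + 1 < heightIn U := by
          refine lt_of_le_of_lt ?_ h2
          have h'' : levelIn U t + 1 ≤ n := h'
          exact_mod_cast h''
        obtain ⟨u, hu, htu⟩ := aux_exists_gt hbal ht hlt
        by_cases hn : levelIn U u ≤ n
        · have hlev : levelIn U t < levelIn U u := aux_levelIn_strict (htree u hu).1 ht htu
          obtain ⟨s, hsU, hsu, hsl⟩ := ih u hu hn (by omega)
          exact ⟨s, hsU, htu.le.trans hsu, hsl⟩
        · push_neg at hn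
          obtain ⟨s, hsU, hsu, hsl⟩ := aux_exists_anc htree hu hn.le
          refine ⟨s, hsU, ?_, hsl⟩
          rcases aux_comparable htree hu ht hsU htu.le hsu with h'' | h''
          · exact h''
          · have := aux_levelIn_mono ((htree t ht).1) h''
            omega
  exact main (n - levelIn U t) t ht h1 le_rfl

end Helpers

/-- If `E` is a subtree of a balanced tree `T`, then there is a strong subtree
`S ⊇ E` of `T` with `L_T(E) = L_T(S)`. -/
theorem subtree_extends_to_strong_subtree {α : Type*} [PartialOrder α]
    (U : Set α) (htree : IsTreeOn U) (hroot : U.Nonempty → IsRootedIn U)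
    (hbal : IsBalanced U) (E : Set α) (hE : IsSubtreeOf U E) :
    ∃ S : Set α, IsStrongSubtreeOf U S ∧ E ⊆ S ∧ levelSetIn U E = levelSetIn U S := by
  clear hroot
  rcases E.eq_empty_or_nonempty with rfl | hEne
  · exact ⟨∅, ⟨⟨Set.empty_subset _, by simp⟩, Or.inl rfl⟩, subset_rfl, rfl⟩
  obtain ⟨e₀, he₀⟩ := hEne
  have hEU := hE.1
  -- the root of E
  obtain ⟨r, hrE, hrmin⟩ : ∃ r ∈ E, ∀ t ∈ E, r ≤ t := by
    set C : Set α := {x ∈ E | x ≤ e₀} with hC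
    have hfin : C.Finite := by
      apply (((htree e₀ (hEU he₀)).1).insert e₀).subset
      intro x hx
      rcases hx.2.lt_or_eq with h' | h'
      · exact Or.inr ⟨hEU hx.1, h'⟩
      · exact Or.inl h'
    have hne : C.Nonempty := ⟨e₀, he₀, le_rfl⟩
    have hch : ∀ x ∈ C, ∀ y ∈ C, x ≤ y ∨ y ≤ x := fun x hx y hy =>
      aux_comparable htree (hEU he₀) (hEU hx.1) (hEU hy.1) hx.2 hy.2
    obtain ⟨r, hr, hmin⟩ := aux_chain_min _ hfin hne hch
    refine ⟨r, hr.1, fun t htE => ?_⟩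
    obtain ⟨m, hmE, hmm⟩ := hE.2 e₀ he₀ t htE
    exact (hmin m ⟨hmE, hmm.2.1⟩).trans hmm.2.2.1
  have hrU : r ∈ U := hEU hrE
  set L : Set ℕ := levelIn U '' E with hL
  have hl0 : ∀ l ∈ L, levelIn U r ≤ l := by
    rintro l ⟨e, heE, rfl⟩
    exact aux_levelIn_mono (htree e (hEU heE)).1 (hrmin e heE)
  have hLheight : ∀ l ∈ L, (l : ℕ∞) < heightIn U := by
    rintro l ⟨e, heE, rfl⟩; exact aux_level_lt_height (hEU heE)
  set nxt : ℕ → ℕ := fun l => sInf {m ∈ L | l < m} with hnxtdef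
  have hnxt : ∀ l, (∃ m ∈ L, l < m) →
      nxt l ∈ L ∧ l < nxt l ∧ ∀ m ∈ L, l < m → nxt l ≤ m := by
    intro l hex
    have hne : {m ∈ L | l < m}.Nonempty := by
      obtain ⟨m, h1, h2⟩ := hex; exact ⟨m, h1, h2⟩
    have hmem := Nat.sInf_mem hne
    exact ⟨hmem.1, hmem.2, fun m h1 h2 => Nat.sInf_le ⟨h1, h2⟩⟩
  -- choice of ancestors
  have hanc_ex : ∀ t n, ∃ s, t ∈ U → n ≤ levelIn U t →
      s ∈ U ∧ s ≤ t ∧ levelIn U s = n := by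
    intro t n
    by_cases h : t ∈ U ∧ n ≤ levelIn U t
    · obtain ⟨s, h1, h2, h3⟩ := aux_exists_anc htree h.1 h.2
      exact ⟨s, fun _ _ => ⟨h1, h2, h3⟩⟩
    · exact ⟨t, fun h1 h2 => absurd ⟨h1, h2⟩ h⟩
  choose anc hanc using hanc_ex
  -- choice of immediate successors
  have hisc_ex : ∀ a u, ∃ v, a ∈ U → u ∈ U → a < u → IsImmSuccIn U a v ∧ v ≤ u := by
    intro a u
    by_cases h : a ∈ U ∧ u ∈ U ∧ a < u
    · obtain ⟨v, h1, h2⟩ := aux_exists_immsucc htree h.1 h.2.1 h.2.2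
      exact ⟨v, fun _ _ _ => ⟨h1, h2⟩⟩
    · exact ⟨a, fun h1 h2 h3 => absurd ⟨h1, h2, h3⟩ h⟩
  choose isc hisc using hisc_ex
  -- choice of the next node in S above a given immediate successor
  have hpick_ex : ∀ t n, ∃ c, t ∈ U → levelIn U t ≤ n → (n : ℕ∞) < heightIn U →
      (c ∈ U ∧ t ≤ c ∧ levelIn U c = n) ∧
      ((∃ x, x ∈ U ∧ t ≤ x ∧ levelIn U x = n ∧ ∃ e ∈ E, x ≤ e) → ∃ e ∈ E, c ≤ e) := by
    intro t n
    by_cases hex : ∃ x, x ∈ U ∧ t ≤ x ∧ levelIn U x = n ∧ ∃ e ∈ E, x ≤ e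
    · obtain ⟨x, h1, h2, h3, h4⟩ := hex
      exact ⟨x, fun _ _ _ => ⟨⟨h1, h2, h3⟩, fun _ => h4⟩⟩
    · by_cases h : t ∈ U ∧ levelIn U t ≤ n ∧ (n : ℕ∞) < heightIn U
      · obtain ⟨c, h1, h2, h3⟩ := aux_exists_above htree hbal h.1 h.2.1 h.2.2
        exact ⟨c, fun _ _ _ => ⟨⟨h1, h2, h3⟩, fun he => absurd he hex⟩⟩
      · exact ⟨t, fun h1 h2 h3 => absurd ⟨h1, h2, h3⟩ h⟩
  choose pick hpick using hpick_ex
  -- basic uniqueness lemmas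
  have hanc_eq : ∀ s, s ∈ U → ∀ x, x ∈ U → x ≤ s → ∀ n, levelIn U x = n → anc s n = x := by
    intro s hs x hx hxs n hxn
    subst hxn
    have hn : levelIn U x ≤ levelIn U s := aux_levelIn_mono (htree s hs).1 hxs
    obtain ⟨h1, h2, h3⟩ := hanc s (levelIn U x) hs hn
    rcases aux_comparable htree hs h1 hx h2 hxs with h | h
    · exact aux_eq_of_le_level (htree x hx).1 h1 h (by omega)
    · exact (aux_eq_of_le_level (htree _ h1).1 hx h (by omega)).symm
  have hlecmp : ∀ s, s ∈ U → ∀ x, x ∈ U → ∀ y, y ∈ U → x ≤ s → y ≤ s →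
      levelIn U x ≤ levelIn U y → x ≤ y := by
    intro s hs x hx y hy hxs hys hl
    rcases aux_comparable htree hs hx hy hxs hys with h | h
    · exact h
    · exact le_of_eq (aux_eq_of_le_level (htree x hx).1 hy h hl).symm
  have hisc_eq : ∀ a, a ∈ U → ∀ u, u ∈ U → a < u → ∀ t, IsImmSuccIn U a t → t ≤ u →
      isc a u = t := by
    intro a ha u hu hau t ht htu
    obtain ⟨h1, h2⟩ := hisc a u ha hu hau
    exact aux_immsucc_unique htree h1 ht hu h2 htu
  -- uniqueness of nodes below E at a minimal L-level
  have hEuniq : ∀ t, t ∈ U → ∀ c₁, c₁ ∈ U → ∀ c₂, c₂ ∈ U → ∀ n, t ≤ c₁ → t ≤ c₂ →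
      levelIn U c₁ = n → levelIn U c₂ = n → (∀ m ∈ L, levelIn U t ≤ m → n ≤ m) →
      (∃ e ∈ E, c₁ ≤ e) → (∃ e ∈ E, c₂ ≤ e) → c₁ = c₂ := by
    rintro t ht c₁ hc₁ c₂ hc₂ n h1 h2 hl1 hl2 hgap ⟨e₁, he₁, hce₁⟩ ⟨e₂, he₂, hce₂⟩
    obtain ⟨m, hmE, hm⟩ := hE.2 e₁ he₁ e₂ he₂
    have hmU : m ∈ U := hm.1
    have htm : t ≤ m := hm.2.2.2 t ht (h1.trans hce₁) (h2.trans hce₂)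
    have hmlev : n ≤ levelIn U m := by
      refine hgap _ ⟨m, hmE, rfl⟩ (aux_levelIn_mono (htree m hmU).1 htm)
    have hc₁m : c₁ ≤ m := hlecmp e₁ (hEU he₁) c₁ hc₁ m hmU hce₁ hm.2.1 (by omega)
    have hc₂m : c₂ ≤ m := hlecmp e₂ (hEU he₂) c₂ hc₂ m hmU hce₂ hm.2.2.1 (by omega)
    exact le_antisymm (hlecmp m hmU c₁ hc₁ c₂ hc₂ hc₁m hc₂m (by omega))
      (hlecmp m hmU c₂ hc₂ c₁ hc₁ hc₂m hc₁m (by omega))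
  -- the strong subtree
  set S : Set α := {s | s ∈ U ∧ r ≤ s ∧ levelIn U s ∈ L ∧
    ∀ l ∈ L, l < levelIn U s → anc s (nxt l) = pick (isc (anc s l) s) (nxt l)} with hSdef
  have hmemS : ∀ s, s ∈ S ↔ (s ∈ U ∧ r ≤ s ∧ levelIn U s ∈ L ∧
      ∀ l ∈ L, l < levelIn U s → anc s (nxt l) = pick (isc (anc s l) s) (nxt l)) :=
    fun s => Iff.rfl
  have hSU : S ⊆ U := fun s hs => hs.1
  -- ancestors of S-nodes at L-levels are in S
  have hancS : ∀ s, s ∈ S → ∀ l ∈ L, l ≤ levelIn U s →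
      anc s l ∈ S ∧ anc s l ≤ s ∧ levelIn U (anc s l) = l := by
    intro s hs l hlL hlle
    obtain ⟨hsU, hrs, hslL, hcond⟩ := hs
    obtain ⟨haU, has, hal⟩ := hanc s l hsU hlle
    have hra : r ≤ anc s l := by
      refine hlecmp s hsU r hrU _ haU hrs has ?_
      rw [hal]; exact hl0 l hlL
    have hredir : ∀ m, m ≤ l → anc (anc s l) m = anc s m := by
      intro m hm
      obtain ⟨hmU, hms, hml⟩ := hanc s m hsU (by omega)
      refine hanc_eq _ haU _ hmU ?_ m hml
      exact hlecmp s hsU _ hmU _ haU hms has (by omega)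
    refine ⟨⟨haU, hra, by rw [hal]; exact hlL, ?_⟩, has, hal⟩
    intro l'' hl''L hl''lt
    rw [hal] at hl''lt
    have hnx := hnxt l'' ⟨l, hlL, hl''lt⟩
    have hnxle : nxt l'' ≤ l := hnx.2.2 l hlL hl''lt
    obtain ⟨ha''U, ha''s, ha''l⟩ := hanc s l'' hsU (by omega)
    have ha''a : anc s l'' < anc s l := by
      have h1 : anc s l'' ≤ anc s l :=
        hlecmp s hsU _ ha''U _ haU ha''s has (by omega)
      exact h1.lt_of_ne (fun h => by rw [h] at ha''l; omega)
    have ha''ss : anc s l'' < s := by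
      refine ha''s.lt_of_ne (fun h => ?_)
      rw [h] at ha''l; omega
    obtain ⟨ht0, ht0s⟩ := hisc (anc s l'') s ha''U hsU ha''ss
    have ht0lev : levelIn U (isc (anc s l'') s) = l'' + 1 := by
      rw [aux_immsucc_level htree ht0, ha''l]
    have ht0a : isc (anc s l'') s ≤ anc s l :=
      hlecmp s hsU _ ht0.2.1 _ haU ht0s has (by omega)
    have hisceq : isc (anc s l'') (anc s l) = isc (anc s l'') s :=
      hisc_eq _ ha''U _ haU ha''a _ ht0 ht0a
    rw [hredir (nxt l'') hnxle, hredir l'' (by omega), hisceq]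
    exact hcond l'' hl''L (by omega)
  -- description of predecessors inside S
  have hpredsS : ∀ s, s ∈ S → predsIn S s = (fun l => anc s l) '' {l ∈ L | l < levelIn U s} := by
    intro s hs
    ext x
    constructor
    · rintro ⟨hxS, hxs⟩
      refine ⟨levelIn U x, ⟨hxS.2.2.1, aux_levelIn_strict (htree s hs.1).1 hxS.1 hxs⟩, ?_⟩
      exact hanc_eq s hs.1 x hxS.1 hxs.le _ rfl
    · rintro ⟨l, ⟨hlL, hllt⟩, rfl⟩
      obtain ⟨h1, h2, h3⟩ := hancS s hs l hlL hllt.le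
      refine ⟨h1, h2.lt_of_ne (fun h => ?_)⟩
      rw [h] at h3; omega
  have hlevS : ∀ s, s ∈ S → levelIn S s = {l ∈ L | l < levelIn U s}.ncard := by
    intro s hs
    rw [levelIn, hpredsS s hs]
    apply Set.ncard_image_of_injOn
    intro l₁ hl₁ l₂ hl₂ heq
    have heq' : anc s l₁ = anc s l₂ := heq
    have e₁ := (hancS s hs l₁ hl₁.1 hl₁.2.le).2.2
    have e₂ := (hancS s hs l₂ hl₂.1 hl₂.2.le).2.2
    rw [← e₁, ← e₂, heq']
  have hcountfin : ∀ n : ℕ, {l ∈ L | l < n}.Finite :=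
    fun n => (Set.finite_Iio n).subset (fun x hx => hx.2)
  have hcount : ∀ l₁ ∈ L, ∀ l₂ : ℕ, l₁ < l₂ → {l ∈ L | l < l₁}.ncard < {l ∈ L | l < l₂}.ncard := by
    intro l₁ hl₁ l₂ hlt
    apply Set.ncard_lt_ncard _ (hcountfin l₂)
    constructor
    · exact fun x hx => ⟨hx.1, hx.2.trans hlt⟩
    · intro hsub
      exact absurd (hsub ⟨hl₁, hlt⟩).2 (lt_irrefl l₁)
  -- one-step extension of S-nodes
  have hstep : ∀ s, s ∈ S → ∀ t, IsImmSuccIn U s t → (∃ m ∈ L, levelIn U s < m) →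
      pick t (nxt (levelIn U s)) ∈ S ∧ t ≤ pick t (nxt (levelIn U s)) ∧
        levelIn U (pick t (nxt (levelIn U s))) = nxt (levelIn U s) := by
    intro s hs t himm hex
    obtain ⟨hl'L, hl'lt, hl'min⟩ := hnxt _ hex
    have htlev : levelIn U t = levelIn U s + 1 := aux_immsucc_level htree himm
    obtain ⟨⟨hcU, htc, hcl⟩, -⟩ :=
      hpick t (nxt (levelIn U s)) himm.2.1 (by omega) (hLheight _ hl'L)
    set c := pick t (nxt (levelIn U s)) with hc
    have hsc : s ≤ c := (himm.2.2.1.trans_le htc).le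
    refine ⟨⟨hcU, hs.2.1.trans hsc, by rw [hcl]; exact hl'L, ?_⟩, htc, hcl⟩
    intro l hlL hllt
    rw [hcl] at hllt
    rcases lt_trichotomy l (levelIn U s) with hcase | hcase | hcase
    · -- inherited conditions
      have hnl := hnxt l ⟨levelIn U s, hs.2.2.1, hcase⟩
      have hnlle : nxt l ≤ levelIn U s := hnl.2.2 _ hs.2.2.1 hcase
      have hredir : ∀ m, m ≤ levelIn U s → anc c m = anc s m := by
        intro m hm
        obtain ⟨hmU, hms, hml⟩ := hanc s m hs.1 hm
        exact hanc_eq c hcU _ hmU (hms.trans hsc) m hml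
      obtain ⟨haU, has, hal⟩ := hanc s l hs.1 hcase.le
      have hass : anc s l < s := has.lt_of_ne (fun h => by rw [h] at hal; omega)
      obtain ⟨ht0, ht0s⟩ := hisc (anc s l) s haU hs.1 hass
      have hisceq : isc (anc s l) c = isc (anc s l) s :=
        hisc_eq _ haU _ hcU (hass.trans_le hsc) _ ht0 (ht0s.trans hsc)
      rw [hredir (nxt l) hnlle, hredir l (by omega), hisceq]
      exact hs.2.2.2 l hlL hcase
    · -- the new condition
      subst hcase
      have h1 : anc c (nxt (levelIn U s)) = c := hanc_eq c hcU c hcU le_rfl _ hcl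
      have h2 : anc c (levelIn U s) = s := hanc_eq c hcU s hs.1 hsc _ rfl
      have h3 : isc s c = t :=
        hisc_eq s hs.1 c hcU (himm.2.2.1.trans_le htc) t himm htc
      rw [h1, h2, h3]
    · exact absurd (hl'min l hlL hcase) (by omega)
  -- climbing through the levels of L inside S
  have hclimb : ∀ k s, s ∈ S → ∀ l ∈ L, levelIn U s ≤ l → l - levelIn U s ≤ k →
      ∃ c ∈ S, s ≤ c ∧ levelIn U c = l := by
    intro k
    induction k with
    | zero => intro s hs l hlL h1 h2; exact ⟨s, hs, le_rfl, by omega⟩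
    | succ k ih =>
      intro s hs l hlL h1 h2
      rcases eq_or_lt_of_le h1 with h' | h'
      · exact ⟨s, hs, le_rfl, h'⟩
      · have hgt : (levelIn U s : ℕ∞) + 1 < heightIn U := by
          refine lt_of_le_of_lt ?_ (hLheight l hlL)
          have : levelIn U s + 1 ≤ l := h'
          exact_mod_cast this
        obtain ⟨u, hu, hsu⟩ := aux_exists_gt hbal hs.1 hgt
        obtain ⟨himm, -⟩ := hisc s u hs.1 hu hsu
        obtain ⟨hcS, htc, hcl⟩ := hstep s hs _ himm ⟨l, hlL, h'⟩
        obtain ⟨hnl1, hnl2, hnl3⟩ := hnxt _ ⟨l, hlL, h'⟩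
        have hnlle : nxt (levelIn U s) ≤ l := hnl3 l hlL h'
        obtain ⟨d, hdS, hcd, hdl⟩ := ih _ hcS l hlL (by omega) (by omega)
        exact ⟨d, hdS, ((himm.2.2.1.trans_le htc).le).trans hcd, hdl⟩
  -- S is closed under meets
  have hsubtree : IsSubtreeOf U S := by
    refine ⟨hSU, fun s hsS t htS => ?_⟩
    obtain ⟨m, hm⟩ := aux_exists_meet htree hsS.1 htS.1 hrU hsS.2.1 htS.2.1
    refine ⟨m, ?_, hm⟩
    obtain ⟨hmU, hms, hmt, hmmax⟩ := hm
    have hrm : r ≤ m := hmmax r hrU hsS.2.1 htS.2.1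
    by_cases hes : levelIn U s ≤ levelIn U m
    · have : m = s := aux_eq_of_le_level (htree s hsS.1).1 hmU hms hes
      rw [this]; exact hsS
    by_cases het : levelIn U t ≤ levelIn U m
    · have : m = t := aux_eq_of_le_level (htree t htS.1).1 hmU hmt het
      rw [this]; exact htS
    push_neg at hes het
    have hmL : levelIn U m ∈ L := by
      by_contra hnot
      set lset : Set ℕ := {l ∈ L | l ≤ levelIn U m} with hlset
      have hfin : lset.Finite := (Set.finite_Iic (levelIn U m)).subset (fun x hx => hx.2)
      have hne : lset.Nonempty :=
        ⟨levelIn U r, ⟨r, hrE, rfl⟩, aux_levelIn_mono (htree m hmU).1 hrm⟩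
      obtain ⟨l, hl, hlmax⟩ := aux_chain_max _ hfin hne (fun x _ y _ => le_total x y)
      have hllt : l < levelIn U m := (hl.2).lt_of_ne (fun h => hnot (h ▸ hl.1))
      have hlls : l < levelIn U s := hllt.trans hes
      have hllt' : l < levelIn U t := hllt.trans het
      obtain ⟨haU, has, hal⟩ := hanc s l hsS.1 hlls.le
      have ham : anc s l ≤ m := hlecmp s hsS.1 _ haU m hmU has hms (by omega)
      have hanc_t : anc t l = anc s l := hanc_eq t htS.1 _ haU (ham.trans hmt) l hal
      have hamlt : anc s l < m := ham.lt_of_ne (fun h => by rw [h] at hal; omega)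
      obtain ⟨hw, hwm⟩ := hisc (anc s l) m haU hmU hamlt
      have hiscs : isc (anc s l) s = isc (anc s l) m :=
        hisc_eq _ haU s hsS.1 (hamlt.trans_le hms) _ hw (hwm.trans hms)
      have hisct : isc (anc t l) t = isc (anc s l) m := by
        rw [hanc_t]
        exact hisc_eq _ haU t htS.1 (hamlt.trans_le hmt) _ hw (hwm.trans hmt)
      obtain ⟨hnl1, hnl2, hnl3⟩ := hnxt l ⟨levelIn U s, hsS.2.2.1, hlls⟩
      have hnlles : nxt l ≤ levelIn U s := hnl3 _ hsS.2.2.1 hlls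
      have hnllet : nxt l ≤ levelIn U t := hnl3 _ htS.2.2.1 hllt'
      have hcs := hsS.2.2.2 l hl.1 hlls
      have hct := htS.2.2.2 l hl.1 hllt'
      rw [hiscs] at hcs
      rw [hisct] at hct
      obtain ⟨hbU, hbs, hbl⟩ := hanc s (nxt l) hsS.1 hnlles
      obtain ⟨hb'U, hb't, hb'l⟩ := hanc t (nxt l) htS.1 hnllet
      have hbb' : anc s (nxt l) = anc t (nxt l) := by rw [hcs, hct]
      have hbm : anc s (nxt l) ≤ m := hmmax _ hbU hbs (hbb' ▸ hb't)
      have : nxt l ≤ levelIn U m := by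
        rw [← hbl]; exact aux_levelIn_mono (htree m hmU).1 hbm
      exact absurd (hlmax (nxt l) ⟨hnl1, this⟩) (by omega)
    -- now  m = anc s (level m) ∈ S
    have heqm : anc s (levelIn U m) = m := hanc_eq s hsS.1 m hmU hms _ rfl
    have := (hancS s hsS _ hmL (aux_levelIn_mono (htree s hsS.1).1 hms)).1
    rwa [heqm] at this
  -- E is contained in S
  have hES : E ⊆ S := by
    intro e heE
    have heU : e ∈ U := hEU heE
    refine ⟨heU, hrmin e heE, ⟨e, heE, rfl⟩, ?_⟩
    intro l hlL hllt
    obtain ⟨hnl1, hnl2, hnl3⟩ := hnxt l ⟨levelIn U e, ⟨e, heE, rfl⟩, hllt⟩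
    have hnlle : nxt l ≤ levelIn U e := hnl3 _ ⟨e, heE, rfl⟩ hllt
    obtain ⟨haU, hae, hal⟩ := hanc e l heU hllt.le
    have hase : anc e l < e := hae.lt_of_ne (fun h => by rw [h] at hal; omega)
    obtain ⟨ht0, ht0e⟩ := hisc (anc e l) e haU heU hase
    set t := isc (anc e l) e with htdef
    have htlev : levelIn U t = l + 1 := by rw [aux_immsucc_level htree ht0, hal]
    obtain ⟨hbU, hbe, hbl⟩ := hanc e (nxt l) heU hnlle
    have htb : t ≤ anc e (nxt l) :=
      hlecmp e heU t ht0.2.1 _ hbU ht0e hbe (by omega)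
    obtain ⟨⟨hpU, htp, hpl⟩, hpE⟩ :=
      hpick t (nxt l) ht0.2.1 (by omega) (hLheight _ hnl1)
    obtain ⟨e', he'E, hpe'⟩ := hpE ⟨anc e (nxt l), hbU, htb, hbl, e, heE, hbe⟩
    refine (hEuniq t ht0.2.1 _ hbU _ hpU (nxt l) htb htp hbl hpl ?_ ⟨e, heE, hbe⟩
      ⟨e', he'E, hpe'⟩)
    intro mm hmmL hmmge
    rw [htlev] at hmmge
    exact hnl3 mm hmmL (by omega)
  have hrS : r ∈ S := hES hrE
  have hSfinpreds : ∀ c, c ∈ S → (predsIn S c).Finite := fun c hc =>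
    ((htree c hc.1).1).subset (fun x hx => ⟨hSU hx.1, hx.2⟩)
  -- level alignment
  have halign : ∀ s ∈ S, ∀ t ∈ S, levelIn S s = levelIn S t → levelIn U s = levelIn U t := by
    intro s hsS t htS h
    rw [hlevS s hsS, hlevS t htS] at h
    rcases lt_trichotomy (levelIn U s) (levelIn U t) with h' | h' | h'
    · exact absurd h (ne_of_lt (hcount _ hsS.2.2.1 _ h'))
    · exact h'
    · exact absurd h.symm (ne_of_lt (hcount _ htS.2.2.1 _ h'))
  -- unique immediate successors in S
  have hsucc : ∀ s ∈ S, ¬ IsMaximalIn S s → ∀ t, IsImmSuccIn U s t →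
      ∃! c, IsImmSuccIn S s c ∧ t ≤ c := by
    intro s hsS hnm t himm
    have hex : ∃ m ∈ L, levelIn U s < m := by
      have hh : ¬ ∀ v ∈ S, ¬ s < v := fun h => hnm ⟨hsS, h⟩
      push_neg at hh
      obtain ⟨s', hs'S, hss'⟩ := hh
      exact ⟨levelIn U s', hs'S.2.2.1, aux_levelIn_strict (htree s' hs'S.1).1 hsS.1 hss'⟩
    obtain ⟨hnl1, hnl2, hnl3⟩ := hnxt _ hex
    obtain ⟨hcS, htc, hcl⟩ := hstep s hsS t himm hex
    set c := pick t (nxt (levelIn U s)) with hcdef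
    have hsc : s < c := himm.2.2.1.trans_le htc
    have hcimm : IsImmSuccIn S s c := by
      refine ⟨hsS, hcS, hsc, fun v hvS hsv hvc => ?_⟩
      have h1 : levelIn U s < levelIn U v := aux_levelIn_strict (htree v hvS.1).1 hsS.1 hsv
      have h2 : levelIn U v < levelIn U c := aux_levelIn_strict (htree c hcS.1).1 hvS.1 hvc
      rw [hcl] at h2
      exact absurd (hnl3 _ hvS.2.2.1 h1) (by omega)
    refine ⟨c, ⟨hcimm, htc⟩, ?_⟩
    rintro c' ⟨hc'imm, htc'⟩
    obtain ⟨-, hc'S, hsc', hc'im⟩ := hc'imm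
    have h1 : levelIn U s < levelIn U c' := aux_levelIn_strict (htree c' hc'S.1).1 hsS.1 hsc'
    have hge : nxt (levelIn U s) ≤ levelIn U c' := hnl3 _ hc'S.2.2.1 h1
    have heq : levelIn U c' = nxt (levelIn U s) := by
      rcases eq_or_lt_of_le hge with h | h
      · exact h.symm
      · exfalso
        obtain ⟨hwS, hwc', hwl⟩ := hancS c' hc'S _ hnl1 hge
        have hsw : s < anc c' (nxt (levelIn U s)) := by
          have hle : s ≤ anc c' (nxt (levelIn U s)) :=
            hlecmp c' hc'S.1 s hsS.1 _ (hSU hwS) hsc'.le hwc' (by omega)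
          exact hle.lt_of_ne (fun hh => by rw [← hh] at hwl; omega)
        have hwlt : anc c' (nxt (levelIn U s)) < c' :=
          hwc'.lt_of_ne (fun hh => by rw [hh] at hwl; omega)
        exact hc'im _ hwS hsw hwlt
    have hcond := hc'S.2.2.2 (levelIn U s) hsS.2.2.1 (by omega)
    have e1 : anc c' (nxt (levelIn U s)) = c' := hanc_eq c' hc'S.1 c' hc'S.1 le_rfl _ heq
    have e2 : anc c' (levelIn U s) = s := hanc_eq c' hc'S.1 s hsS.1 hsc'.le _ rfl
    have e3 : isc s c' = t := hisc_eq s hsS.1 c' hc'S.1 hsc' t himm htc'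
    rw [e1, e2, e3] at hcond
    exact hcond
  -- S is balanced
  have hbalS : IsBalanced S := by
    by_cases hLb : ∃ lmax ∈ L, ∀ l ∈ L, l ≤ lmax
    · obtain ⟨lmax, hlmaxL, hlmax⟩ := hLb
      obtain ⟨smax, hsmaxS, -, hsmaxl⟩ :=
        hclimb (lmax - levelIn U r) r hrS lmax hlmaxL (hl0 _ hlmaxL) le_rfl
      have hhS : heightIn S = (levelIn S smax : ℕ∞) + 1 := by
        apply le_antisymm
        · refine iSup₂_le (fun t htS => ?_)
          have hmono : levelIn S t ≤ levelIn S smax := by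
            rw [hlevS t htS, hlevS smax hsmaxS, hsmaxl]
            exact Set.ncard_le_ncard
              (fun x hx => ⟨hx.1, lt_of_lt_of_le hx.2 (hlmax _ htS.2.2.1)⟩) (hcountfin lmax)
          exact add_le_add_left (Nat.cast_le.mpr hmono) 1
        · exact le_iSup₂ (f := fun t _ => ((levelIn S t : ℕ∞) + 1)) smax hsmaxS
      refine Or.inr ⟨?_, ?_⟩
      · rw [hhS]
        intro hcontra
        have h2 : ((levelIn S smax + 1 : ℕ) : ℕ∞) = ⊤ := by push_cast; exact hcontra
        exact ENat.coe_ne_top _ h2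
      · intro t htmax
        obtain ⟨htS, htmax'⟩ := htmax
        have hlt : levelIn U t = lmax := by
          rcases eq_or_lt_of_le (hlmax _ htS.2.2.1) with h | h
          · exact h
          · exfalso
            have hgt : (levelIn U t : ℕ∞) + 1 < heightIn U := by
              refine lt_of_le_of_lt ?_ (hLheight lmax hlmaxL)
              have hh : levelIn U t + 1 ≤ lmax := h
              exact_mod_cast hh
            obtain ⟨u, hu, htu⟩ := aux_exists_gt hbal htS.1 hgt
            obtain ⟨himm, -⟩ := hisc t u htS.1 hu htu
            obtain ⟨hcS, htc, -⟩ := hstep t htS _ himm ⟨lmax, hlmaxL, h⟩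
            exact htmax' _ hcS (himm.2.2.1.trans_le htc)
        have hleq : levelIn S t = levelIn S smax := by
          rw [hlevS t htS, hlevS smax hsmaxS, hlt, hsmaxl]
        rw [hleq, hhS]
    · push_neg at hLb
      have hgrow : ∀ k, ∃ s ∈ S, k ≤ levelIn S s := by
        intro k
        induction k with
        | zero => exact ⟨r, hrS, Nat.zero_le _⟩
        | succ k ih =>
          obtain ⟨s, hsS, hk⟩ := ih
          obtain ⟨l, hlL, hsl⟩ := hLb _ hsS.2.2.1
          obtain ⟨c, hcS, hsc, hcl⟩ := hclimb (l - levelIn U s) s hsS l hlL hsl.le le_rfl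
          have hlt : s < c := hsc.lt_of_ne
            (fun h => by rw [h, hcl] at hsl; exact lt_irrefl l hsl)
          have := aux_levelIn_strict (hSfinpreds c hcS) hsS hlt
          exact ⟨c, hcS, by omega⟩
      refine Or.inl ⟨?_, ?_⟩
      · by_contra hcontra
        obtain ⟨n, hn⟩ := WithTop.ne_top_iff_exists.mp hcontra
        obtain ⟨s, hsS, hks⟩ := hgrow n
        have h1 : ((levelIn S s : ℕ∞) + 1) ≤ heightIn S :=
          le_iSup₂ (f := fun t _ => ((levelIn S t : ℕ∞) + 1)) s hsS
        rw [← hn] at h1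
        have h2 : levelIn S s + 1 ≤ n := by
          have h3 : ((levelIn S s + 1 : ℕ) : ℕ∞) ≤ (n : ℕ∞) := by push_cast; exact h1
          exact Nat.cast_le.mp h3
        omega
      · intro t htmax
        obtain ⟨htS, htmax'⟩ := htmax
        obtain ⟨l, hlL, hsl⟩ := hLb _ htS.2.2.1
        obtain ⟨c, hcS, hsc, hcl⟩ := hclimb (l - levelIn U t) t htS l hlL hsl.le le_rfl
        have hlt : t < c := hsc.lt_of_ne
          (fun h => by rw [h, hcl] at hsl; exact lt_irrefl l hsl)
        exact htmax' c hcS hlt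
  refine ⟨S, ⟨hsubtree, Or.inr ⟨⟨r, hrS, fun t htS => htS.2.1⟩, hbalS, halign, hsucc⟩⟩,
    hES, ?_⟩
  apply Set.Subset.antisymm
  · exact Set.image_mono hES
  · rintro n ⟨s, hsS, rfl⟩
    exact hsS.2.2.1
end

section
/- For every k ∈ ω + 1 and every valuation tree T ⊆ T_2 of height k, there exists a unique structural isomorphism f : T_2(<k) → T, where T_2(<k) denotes the set of nodes of T_2 of level less than k (all of T_2 when k = ω). -/
open scoped Classical

/-- A finite `{0,1}`-vector: a function `len → Bool`, represented with total entry
function which vanishes from index `len` on. Nodes of the tree `T₁`. -/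
structure Vec where
  len : ℕ
  entry : ℕ → Bool
  outside : ∀ i, len ≤ i → entry i = false

/-- A finite strictly lower triangular square `{0,1}`-matrix: a function
`size × size → Bool` with `entry i j = 0` for `i ≤ j`, represented with a total entry
function which vanishes outside. Nodes of the tree `T₂`. -/
structure Mat where
  size : ℕ
  entry : ℕ → ℕ → Bool
  lower : ∀ i j, i ≤ j → entry i j = false
  outside : ∀ i j, size ≤ i → entry i j = false

/-- The tree order on `T₁`: end-extension of finite `{0,1}`-vectors. -/
instance : PartialOrder Vec where
  le u v := u.len ≤ v.len ∧ ∀ i, i < u.len → u.entry i = v.entry i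
  le_refl u := ⟨le_rfl, fun _ _ => rfl⟩
  le_trans u v w h h' :=
    ⟨h.1.trans h'.1, fun i hi => (h.2 i hi).trans (h'.2 i (lt_of_lt_of_le hi h.1))⟩
  le_antisymm u v h h' := by
    have hl : u.len = v.len := le_antisymm h.1 h'.1
    have he : u.entry = v.entry := by
      funext i
      by_cases hi : i < u.len
      · exact h.2 i hi
      · rw [u.outside i (not_lt.mp hi), v.outside i (by omega)]
    cases u; cases v
    simp only at hl he
    subst hl; subst he; rfl

/-- The tree order on `T₂`: extension of strictly lower triangular `{0,1}`-matrices. -/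
instance : PartialOrder Mat where
  le A B := A.size ≤ B.size ∧ ∀ i j, i < A.size → j < A.size → A.entry i j = B.entry i j
  le_refl A := ⟨le_rfl, fun _ _ _ _ => rfl⟩
  le_trans A B C h h' :=
    ⟨h.1.trans h'.1, fun i j hi hj => (h.2 i j hi hj).trans
      (h'.2 i j (lt_of_lt_of_le hi h.1) (lt_of_lt_of_le hj h.1))⟩
  le_antisymm A B h h' := by
    have hl : A.size = B.size := le_antisymm h.1 h'.1
    have he : A.entry = B.entry := by
      funext i j
      by_cases hi : i < A.size
      · by_cases hj : j < A.size
        · exact h.2 i j hi hj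
        · -- j ≥ A.size and i < A.size, so i < j and both entries vanish
          rw [A.lower i j (by omega), B.lower i j (by omega)]
      · rw [A.outside i j (not_lt.mp hi), B.outside i j (by omega)]
    cases A; cases B
    simp only at hl he
    subst hl; subst he; rfl

/-- The extension `A⌢v` of an `n × n` matrix `A` by a vector `v` of length `n`:
the `(n+1) × (n+1)` matrix extending `A` whose last row is `v` followed by `0` and whose
last column is zero. -/
def matExtend (A : Mat) (v : Vec) : Mat where
  size := A.size + 1
  entry := fun i j =>
    if i < A.size then A.entry i j
    else if i = A.size ∧ j < A.size then v.entry j else false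
  lower := by
    intro i j hij
    by_cases h1 : i < A.size
    · simp only [if_pos h1]
      exact A.lower i j hij
    · show (if i < A.size then A.entry i j
          else if i = A.size ∧ j < A.size then v.entry j else false) = false
      rw [if_neg h1, if_neg (by omega)]
  outside := by
    intro i j hi
    show (if i < A.size then A.entry i j
        else if i = A.size ∧ j < A.size then v.entry j else false) = false
    rw [if_neg (by omega), if_neg (by omega)]

/-- The `m`-th row of a matrix `A`, as a `{0,1}`-vector of length `|A|`. -/
def rowOf (A : Mat) (m : ℕ) : Vec where
  len := A.size
  entry := fun l => A.entry m l
  outside := by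
    intro l hl
    rcases le_or_gt m l with h | h
    · exact A.lower m l h
    · exact A.outside m l (hl.trans h.le)
/-- A 3-uniform hypergraph on a vertex set `V`: a set of hyperedges, each a 3-element
subset of `V`. -/
structure HGraph (V : Type*) where
  edges : Set (Finset V)
  card_eq : ∀ e ∈ edges, e.card = 3

/-- An embedding of 3-uniform hypergraphs: an injective map `f` between the vertex sets
such that `{x, y, z}` is a hyperedge if and only if `{f x, f y, f z}` is a hyperedge. -/
def IsHGEmbedding {V W : Type*} (A : HGraph V) (B : HGraph W) (f : V → W) : Prop :=
  Function.Injective f ∧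
    ∀ x y z : V, ({x, y, z} : Finset V) ∈ A.edges ↔ ({f x, f y, f z} : Finset W) ∈ B.edges

/-- The 3-uniform hypergraph `G`: its vertices are the nodes of the tree `T₂`
(i.e. finite strictly lower triangular `{0,1}`-matrices), and `{A, B, C}` is a hyperedge
if and only if `|A| < |B| < |C|` and `C_{|B|, |A|} = 1`. -/
noncomputable def Ghyp : HGraph Mat where
  edges := {e | ∃ A B C : Mat, e = {A, B, C} ∧
    A.size < B.size ∧ B.size < C.size ∧ C.entry B.size A.size = true}
  card_eq := by
    rintro e ⟨A, B, C, rfl, h1, h2, -⟩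
    refine Finset.card_eq_three.mpr ⟨A, B, C, ?_, ?_, ?_, rfl⟩
    · exact fun h => absurd (congrArg Mat.size h) (by omega)
    · exact fun h => absurd (congrArg Mat.size h) (by omega)
    · exact fun h => absurd (congrArg Mat.size h) (by omega)

/-- Given a 3-uniform hypergraph `H` on `ℕ`, the matrix `A^i` assigned to the vertex
`i`: the `(2i+1) × (2i+1)` strictly lower triangular `{0,1}`-matrix with
`A^i_{2k+1, 2j} = A^i_{2k+1, 2j+1} = 1` for every hyperedge `{j, k, i}` of `H` with
`j < k < i`, and all other entries `0`. -/
noncomputable def matOf (H : HGraph ℕ) (i : ℕ) : Mat where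
  size := 2 * i + 1
  entry := fun r c =>
    if r % 2 = 1 ∧ c / 2 < r / 2 ∧ r / 2 < i ∧ ({c / 2, r / 2, i} : Finset ℕ) ∈ H.edges
    then true else false
  lower := by
    intro r c hrc
    show (if r % 2 = 1 ∧ c / 2 < r / 2 ∧ r / 2 < i ∧ ({c / 2, r / 2, i} : Finset ℕ) ∈ H.edges
        then true else false) = false
    rw [if_neg]
    rintro ⟨h1, h2, h3, -⟩
    omega
  outside := by
    intro r c hr
    show (if r % 2 = 1 ∧ c / 2 < r / 2 ∧ r / 2 < i ∧ ({c / 2, r / 2, i} : Finset ℕ) ∈ H.edges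
        then true else false) = false
    rw [if_neg]
    rintro ⟨h1, h2, h3, -⟩
    omega

/-- The valuation tree `val(S₁, S₂)` corresponding to a vector strong subtree
`(S₁, S₂)` of `(T₁, T₂)`, as a predicate: the root of `S₂` belongs to it, and whenever
`A` belongs to it, `v ∈ S₁(|A|_{S₂})` and `{C} = ImmSucc_{S₂}(A) ∩ Succ_{T₂}(A⌢v)`,
then `C` belongs to it. -/
inductive InVal (S₁ : Set Vec) (S₂ : Set Mat) : Mat → Prop where
  | root (A : Mat) (hA : A ∈ S₂) (hroot : ∀ B ∈ S₂, A ≤ B) : InVal S₁ S₂ A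
  | step (A : Mat) (v : Vec) (C : Mat) (hA : InVal S₁ S₂ A) (hv : v ∈ S₁)
      (hlev : levelIn S₁ v = levelIn S₂ A)
      (hC : IsImmSuccIn S₂ A C ∧ matExtend A v ≤ C)
      (huniq : ∀ C' : Mat, IsImmSuccIn S₂ A C' ∧ matExtend A v ≤ C' → C' = C) :
      InVal S₁ S₂ C

/-- `(S₁, S₂)` is a vector strong subtree of the vector tree `(T₁, T₂)`:
both coordinates are strong subtrees of the respective (ambient) trees and the pair is
level compatible, i.e. `L_{T₁}(S₁) = L_{T₂}(S₂)`. -/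
def IsVecStrongPair (S₁ : Set Vec) (S₂ : Set Mat) : Prop :=
  IsStrongSubtreeOf Set.univ S₁ ∧ IsStrongSubtreeOf Set.univ S₂ ∧
    levelSetIn Set.univ S₁ = levelSetIn Set.univ S₂

/-- A subset of `T₂` is a valuation tree if it equals `val(S₁, S₂)` for some vector
strong subtree `(S₁, S₂)` of `(T₁, T₂)`. -/
def IsValTree (T : Set Mat) : Prop :=
  ∃ S₁ S₂, IsVecStrongPair S₁ S₂ ∧ T = {C | InVal S₁ S₂ C}

/-- A structural isomorphism between subtrees `T` and `T'` of `T₂`: an isomorphism of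
trees preserving relative heights of nodes such that, for all `A, B, C ∈ T` with
`|A| ≤ |B| < |C|`, one has `f(C)_{|f(B)|, |f(A)|} = C_{|B|, |A|}`. -/
structure IsStructIso (T T' : Set Mat) (f : Mat → Mat) : Prop where
  mapsTo : ∀ A ∈ T, f A ∈ T'
  injOn : ∀ A ∈ T, ∀ B ∈ T, f A = f B → A = B
  surjOn : ∀ C ∈ T', ∃ A ∈ T, f A = C
  orderIso : ∀ A ∈ T, ∀ B ∈ T, (A ≤ B ↔ f A ≤ f B)
  levelEq : ∀ A ∈ T, levelIn T A = levelIn T' (f A)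
  passing : ∀ A ∈ T, ∀ B ∈ T, ∀ C ∈ T, A.size ≤ B.size → B.size < C.size →
    (f C).entry (f B).size (f A).size = C.entry B.size A.size

/-! ### Auxiliary lemmas -/

section TreeLemmas

variable {α : Type*} [PartialOrder α]

theorem predsIn_finite (hfin : ∀ t : α, {s | s < t}.Finite) (U : Set α) (t : α) :
    (predsIn U t).Finite :=
  (hfin t).subset fun _ hs => hs.2

theorem levelIn_lt_of_lt (hfin : ∀ t : α, {s | s < t}.Finite) {U : Set α} {s t : α}
    (hs : s ∈ U) (hst : s < t) : levelIn U s < levelIn U t := by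
  have hsub : predsIn U s ⊆ predsIn U t := fun x hx => ⟨hx.1, hx.2.trans hst⟩
  have hss : predsIn U s ⊂ predsIn U t := by
    refine ⟨hsub, fun h => ?_⟩
    exact absurd (h ⟨hs, hst⟩).2 (lt_irrefl s)
  exact Set.ncard_lt_ncard hss (predsIn_finite hfin U t)

theorem levelIn_le_of_le (hfin : ∀ t : α, {s | s < t}.Finite) {U : Set α} {s t : α}
    (hs : s ∈ U) (hst : s ≤ t) : levelIn U s ≤ levelIn U t := by
  rcases hst.lt_or_eq with h | rfl
  · exact (levelIn_lt_of_lt hfin hs h).le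
  · exact le_rfl

theorem exists_pred_at (hlin : ∀ t s₁ s₂ : α, s₁ < t → s₂ < t → s₁ ≤ s₂ ∨ s₂ ≤ s₁)
    (hfin : ∀ t : α, {s | s < t}.Finite) (U : Set α) :
    ∀ n, ∀ t ∈ U, levelIn U t = n → ∀ m, m < n → ∃ s ∈ U, s < t ∧ levelIn U s = m := by
  intro n
  induction n using Nat.strong_induction_on with
  | _ n IH =>
    intro t ht hn m hm
    have hfinp : (predsIn U t).Finite := predsIn_finite hfin U t
    have hne : (predsIn U t).Nonempty := by
      rw [← Set.ncard_pos hfinp]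
      have hn' : (predsIn U t).ncard = n := hn
      omega
    obtain ⟨a, ha, hamax'⟩ := hfinp.exists_maximalFor (levelIn U) _ hne
    have hamax : ∀ x ∈ predsIn U t, levelIn U a ≤ levelIn U x → levelIn U a = levelIn U x :=
      fun x hx h => le_antisymm h (hamax' hx h)
    have hale : ∀ x ∈ predsIn U t, x ≤ a := by
      intro x hx
      rcases hlin t x a hx.2 ha.2 with h | h
      · exact h
      rcases h.lt_or_eq with h | h
      · exact absurd (hamax x hx (levelIn_lt_of_lt hfin ha.1 h).le)
          (levelIn_lt_of_lt hfin ha.1 h).ne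
      · exact h.ge
    have hpa : predsIn U a = predsIn U t \ {a} := by
      ext x
      constructor
      · intro hx
        exact ⟨⟨hx.1, hx.2.trans ha.2⟩, fun h => absurd (h ▸ hx.2) (lt_irrefl a)⟩
      · rintro ⟨hx, hxa⟩
        exact ⟨hx.1, lt_of_le_of_ne (hale x hx) (by simpa using hxa)⟩
    have hla : levelIn U a = n - 1 := by
      have h1 : levelIn U a = (predsIn U t \ {a}).ncard := by
        show (predsIn U a).ncard = _
        rw [hpa]
      rw [h1, Set.ncard_diff_singleton_of_mem ha]
      have hn' : (predsIn U t).ncard = n := hn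
      omega
    rcases Nat.lt_or_ge m (n - 1) with h | h
    · obtain ⟨s, hs, hsa, hls⟩ := IH (n - 1) (by omega) a ha.1 hla m h
      exact ⟨s, hs, hsa.trans ha.2, hls⟩
    · have : m = n - 1 := by omega
      exact ⟨a, ha.1, ha.2, by omega⟩

theorem uniq_at_level (hlin : ∀ t s₁ s₂ : α, s₁ < t → s₂ < t → s₁ ≤ s₂ ∨ s₂ ≤ s₁)
    (hfin : ∀ t : α, {s | s < t}.Finite) {U : Set α} {s₁ s₂ t : α}
    (h₁ : s₁ ∈ U) (h₂ : s₂ ∈ U) (hle₁ : s₁ ≤ t) (hle₂ : s₂ ≤ t)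
    (hl : levelIn U s₁ = levelIn U s₂) : s₁ = s₂ := by
  rcases hle₁.lt_or_eq with hlt₁ | rfl
  · rcases hle₂.lt_or_eq with hlt₂ | rfl
    · rcases hlin t s₁ s₂ hlt₁ hlt₂ with h | h
      · rcases h.lt_or_eq with h | h
        · exact absurd hl (levelIn_lt_of_lt hfin h₁ h).ne
        · exact h
      · rcases h.lt_or_eq with h | h
        · exact absurd hl.symm (levelIn_lt_of_lt hfin h₂ h).ne
        · exact h.symm
    · exact absurd hl (levelIn_lt_of_lt hfin h₁ hlt₁).ne
  · rcases hle₂.lt_or_eq with hlt₂ | rfl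
    · exact absurd hl.symm (levelIn_lt_of_lt hfin h₂ hlt₂).ne
    · rfl

theorem isImmSucc_level (hlin : ∀ t s₁ s₂ : α, s₁ < t → s₂ < t → s₁ ≤ s₂ ∨ s₂ ≤ s₁)
    (hfin : ∀ t : α, {s | s < t}.Finite) {U : Set α} {s t : α}
    (h : IsImmSuccIn U s t) : levelIn U t = levelIn U s + 1 := by
  obtain ⟨hs, ht, hst, hbet⟩ := h
  have hp : predsIn U t = insert s (predsIn U s) := by
    ext x
    constructor
    · intro hx
      rcases hlin t x s hx.2 hst with h | h
      · rcases h.lt_or_eq with h | h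
        · exact Or.inr ⟨hx.1, h⟩
        · exact Or.inl h
      · rcases h.lt_or_eq with h | h
        · exact absurd hx.2 (hbet x hx.1 h)
        · exact Or.inl h.symm
    · rintro (rfl | hx)
      · exact ⟨hs, hst⟩
      · exact ⟨hx.1, hx.2.trans hst⟩
  have : (predsIn U t).ncard = (predsIn U s).ncard + 1 := by
    rw [hp, Set.ncard_insert_of_notMem (fun h => absurd h.2 (lt_irrefl s))
      (predsIn_finite hfin U s)]
  exact this

theorem isImmSucc_of_level (hfin : ∀ t : α, {s | s < t}.Finite) {U : Set α} {s t : α}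
    (hs : s ∈ U) (ht : t ∈ U) (hst : s < t)
    (hl : levelIn U t = levelIn U s + 1) : IsImmSuccIn U s t := by
  refine ⟨hs, ht, hst, fun u hu hsu hut => ?_⟩
  have h1 := levelIn_lt_of_lt hfin hs hsu
  have h2 := levelIn_lt_of_lt hfin hu hut
  omega

theorem level_add_one_le_height {U : Set α} {t : α} (ht : t ∈ U) :
    ((levelIn U t : ℕ∞) + 1) ≤ heightIn U :=
  le_iSup₂ (f := fun t (_ : t ∈ U) => ((levelIn U t : ℕ∞) + 1)) t ht

theorem exists_at_level_of_lt_height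
    (hlin : ∀ t s₁ s₂ : α, s₁ < t → s₂ < t → s₁ ≤ s₂ ∨ s₂ ≤ s₁)
    (hfin : ∀ t : α, {s | s < t}.Finite) {U : Set α} {n : ℕ}
    (hn : (n : ℕ∞) < heightIn U) : ∃ t ∈ U, levelIn U t = n := by
  simp only [heightIn, lt_iSup_iff] at hn
  obtain ⟨t, ht, hn⟩ := hn
  have hle : n ≤ levelIn U t := by
    have : (n : ℕ∞) < ((levelIn U t + 1 : ℕ) : ℕ∞) := by push_cast; exact hn
    exact_mod_cast Nat.lt_succ_iff.mp (by exact_mod_cast this)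
  rcases hle.lt_or_eq with h | h
  · obtain ⟨s, hs, _, hls⟩ := exists_pred_at hlin hfin U _ t ht rfl n h
    exact ⟨s, hs, hls⟩
  · exact ⟨t, ht, h.symm⟩

theorem notMaximalIn_iff {U : Set α} {t : α} (ht : t ∈ U) :
    ¬ IsMaximalIn U t ↔ ∃ s ∈ U, t < s := by
  unfold IsMaximalIn
  push_neg
  simp [ht]

theorem nonmax_of_same_level
    (hfin : ∀ t : α, {s | s < t}.Finite) {U : Set α} {s t : α}
    (hb : IsBalanced U) (hs : s ∈ U) (ht : t ∈ U)
    (hl : levelIn U s = levelIn U t) (htn : ¬ IsMaximalIn U t) :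
    ¬ IsMaximalIn U s := by
  intro hmax
  rcases hb with ⟨_, hno⟩ | ⟨_, hball⟩
  · exact hno s hmax
  · obtain ⟨u, hu, htu⟩ := (notMaximalIn_iff ht).mp htn
    have h1 := hball s hmax
    have h2 := level_add_one_le_height hu
    rw [← h1] at h2
    have h3 := levelIn_lt_of_lt hfin ht htu
    have : levelIn U u + 1 ≤ levelIn U s + 1 := by exact_mod_cast h2
    omega

end TreeLemmas

section ConcreteLemmas

/-! #### Vec lemmas -/

theorem Vec.ext' {v w : Vec} (hl : v.len = w.len)
    (he : ∀ i, i < v.len → v.entry i = w.entry i) : v = w := by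
  have hE : v.entry = w.entry := by
    funext i
    by_cases hi : i < v.len
    · exact he i hi
    · rw [v.outside i (le_of_not_gt hi), w.outside i (by omega)]
  cases v; cases w
  simp only at hl hE
  subst hl; subst hE; rfl

theorem Vec.le_def {v w : Vec} :
    v ≤ w ↔ v.len ≤ w.len ∧ ∀ i, i < v.len → v.entry i = w.entry i := Iff.rfl

theorem Vec.len_lt_of_lt {v w : Vec} (h : v < w) : v.len < w.len := by
  rcases lt_or_ge v.len w.len with h' | h'
  · exact h'
  · exact absurd (Vec.ext' (le_antisymm h.le.1 h') h.le.2) h.ne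

/-- Restriction of a vector to its first `n` entries. -/
def restV (v : Vec) (n : ℕ) : Vec where
  len := n
  entry := fun i => if i < n then v.entry i else false
  outside := fun i hi => if_neg (by omega)

@[simp] theorem restV_len (v : Vec) (n : ℕ) : (restV v n).len = n := rfl

theorem restV_entry (v : Vec) {n i : ℕ} (hi : i < n) : (restV v n).entry i = v.entry i :=
  if_pos hi

theorem restV_le {v : Vec} {n : ℕ} (hn : n ≤ v.len) : restV v n ≤ v :=
  ⟨hn, fun i hi => restV_entry v hi⟩

theorem eq_restV_of_le {s v : Vec} (h : s ≤ v) : s = restV v s.len :=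
  Vec.ext' rfl fun i hi => (h.2 i hi).trans (restV_entry v hi).symm

theorem restV_mono (v : Vec) {m n : ℕ} (h : m ≤ n) : restV v m ≤ restV v n :=
  ⟨h, fun i hi => by
    have hi' : i < m := hi
    rw [restV_entry v hi', restV_entry v (lt_of_lt_of_le hi' h)]⟩

theorem vec_hfin : ∀ t : Vec, {s | s < t}.Finite := by
  intro t
  apply Set.Finite.subset ((Set.finite_Iio t.len).image (restV t))
  intro s hs
  exact ⟨s.len, Vec.len_lt_of_lt hs, (eq_restV_of_le (le_of_lt hs)).symm⟩

theorem vec_hlin : ∀ t s₁ s₂ : Vec, s₁ < t → s₂ < t → s₁ ≤ s₂ ∨ s₂ ≤ s₁ := by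
  intro t s₁ s₂ h₁ h₂
  rw [eq_restV_of_le h₁.le, eq_restV_of_le h₂.le]
  rcases le_total s₁.len s₂.len with h | h
  · exact Or.inl (restV_mono t h)
  · exact Or.inr (restV_mono t h)

theorem ncard_Iio (n : ℕ) : (Set.Iio n).ncard = n := by
  have : (Set.Iio n) = ↑(Finset.range n) := by ext x; simp
  rw [this, Set.ncard_coe_finset, Finset.card_range]

theorem levelIn_vec {U : Set Vec} {v : Vec} (h : ∀ s, s < v → s ∈ U) :
    levelIn U v = v.len := by
  have hp : predsIn U v = restV v '' Set.Iio v.len := by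
    ext s
    constructor
    · intro hs
      exact ⟨s.len, Vec.len_lt_of_lt hs.2, (eq_restV_of_le hs.2.le).symm⟩
    · rintro ⟨n, hn, rfl⟩
      have hlt : restV v n < v := by
        refine lt_of_le_of_ne (restV_le (le_of_lt hn)) (fun he => ?_)
        have h2 : n = v.len := congrArg Vec.len he
        exact absurd h2 (Nat.ne_of_lt hn)
      exact ⟨h _ hlt, hlt⟩
  rw [levelIn, hp, Set.ncard_image_of_injOn, ncard_Iio]
  intro a _ b _ hab
  have := congrArg Vec.len hab
  simpa using this

/-- Extension of a vector by one bit. -/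
def vecExtend (v : Vec) (b : Bool) : Vec where
  len := v.len + 1
  entry := fun i => if i < v.len then v.entry i else if i = v.len then b else false
  outside := fun i hi => by
    show (if i < v.len then v.entry i else if i = v.len then b else false) = false
    rw [if_neg (by omega), if_neg (by omega)]

theorem vecExtend_entry_last (v : Vec) (b : Bool) : (vecExtend v b).entry v.len = b := by
  show (if v.len < v.len then v.entry v.len else if v.len = v.len then b else false) = b
  rw [if_neg (lt_irrefl _), if_pos rfl]

theorem lt_vecExtend (v : Vec) (b : Bool) : v < vecExtend v b := by
  refine lt_of_le_of_ne ⟨Nat.le_succ _, fun i hi => (if_pos hi).symm⟩ (fun he => ?_)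
  have := congrArg Vec.len he
  simp [vecExtend] at this

theorem vecExtend_immSucc (v : Vec) (b : Bool) :
    IsImmSuccIn (Set.univ : Set Vec) v (vecExtend v b) := by
  refine ⟨trivial, trivial, lt_vecExtend v b, fun u _ hvu hut => ?_⟩
  have h1 := Vec.len_lt_of_lt hvu
  have h2 := Vec.len_lt_of_lt hut
  have : (vecExtend v b).len = v.len + 1 := rfl
  omega

theorem vecExtend_le_of_le {u w : Vec} (h : u ≤ w) (hlen : u.len < w.len) :
    vecExtend u (w.entry u.len) ≤ w := by
  refine ⟨hlen, fun i hi => ?_⟩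
  have hi' : i < u.len + 1 := hi
  by_cases hiu : i < u.len
  · show (if i < u.len then u.entry i else _) = w.entry i
    rw [if_pos hiu]; exact h.2 i hiu
  · have : i = u.len := by omega
    subst this
    exact vecExtend_entry_last u (w.entry u.len)

/-! #### Mat lemmas -/

theorem Mat.ext' {A B : Mat} (hl : A.size = B.size)
    (he : ∀ i j, j < i → i < A.size → A.entry i j = B.entry i j) : A = B := by
  have hE : A.entry = B.entry := by
    funext i j
    by_cases hi : i < A.size
    · by_cases hj : j < i
      · exact he i j hj hi
      · rw [A.lower i j (le_of_not_gt hj), B.lower i j (le_of_not_gt hj)]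
    · rw [A.outside i j (le_of_not_gt hi), B.outside i j (by omega)]
  cases A; cases B
  simp only at hl hE
  subst hl; subst hE; rfl

theorem Mat.le_def {A B : Mat} :
    A ≤ B ↔ A.size ≤ B.size ∧ ∀ i j, i < A.size → j < A.size → A.entry i j = B.entry i j :=
  Iff.rfl

theorem Mat.entry_eq_of_le {A B : Mat} (h : A ≤ B) {i j : ℕ} (hi : i < A.size) :
    A.entry i j = B.entry i j := by
  by_cases hj : j < A.size
  · exact h.2 i j hi hj
  · have hij : i < j := by omega
    rw [A.lower i j hij.le, B.lower i j hij.le]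

theorem Mat.size_lt_of_lt {A B : Mat} (h : A < B) : A.size < B.size := by
  rcases lt_or_ge A.size B.size with h' | h'
  · exact h'
  · refine absurd (Mat.ext' (le_antisymm h.le.1 h') ?_) h.ne
    intro i j hj hi
    exact h.le.2 i j hi (by omega)

/-- Restriction of a matrix to its first `n` rows and columns. -/
def restM (A : Mat) (n : ℕ) : Mat where
  size := n
  entry := fun i j => if i < n then A.entry i j else false
  lower := fun i j hij => by
    by_cases hi : i < n
    · show (if i < n then A.entry i j else false) = false
      rw [if_pos hi]; exact A.lower i j hij
    · exact if_neg hi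
  outside := fun i j hi => if_neg (by omega)

@[simp] theorem restM_size (A : Mat) (n : ℕ) : (restM A n).size = n := rfl

theorem restM_entry (A : Mat) {n i : ℕ} (j : ℕ) (hi : i < n) :
    (restM A n).entry i j = A.entry i j := if_pos hi

theorem restM_le {A : Mat} {n : ℕ} (hn : n ≤ A.size) : restM A n ≤ A :=
  ⟨hn, fun i j hi _ => restM_entry A j hi⟩

theorem eq_restM_of_le {B A : Mat} (h : B ≤ A) : B = restM A B.size := by
  refine Mat.ext' rfl fun i j hj hi => ?_
  rw [Mat.entry_eq_of_le h hi, restM_entry A j hi]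

theorem restM_mono (A : Mat) {m n : ℕ} (h : m ≤ n) : restM A m ≤ restM A n :=
  ⟨h, fun i j hi _ => by
    have hi' : i < m := hi
    rw [restM_entry A j hi', restM_entry A j (lt_of_lt_of_le hi' h)]⟩

theorem mat_hfin : ∀ t : Mat, {s | s < t}.Finite := by
  intro t
  apply Set.Finite.subset ((Set.finite_Iio t.size).image (restM t))
  intro s hs
  exact ⟨s.size, Mat.size_lt_of_lt hs, (eq_restM_of_le (le_of_lt hs)).symm⟩

theorem mat_hlin : ∀ t s₁ s₂ : Mat, s₁ < t → s₂ < t → s₁ ≤ s₂ ∨ s₂ ≤ s₁ := by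
  intro t s₁ s₂ h₁ h₂
  rw [eq_restM_of_le h₁.le, eq_restM_of_le h₂.le]
  rcases le_total s₁.size s₂.size with h | h
  · exact Or.inl (restM_mono t h)
  · exact Or.inr (restM_mono t h)

theorem levelIn_mat {U : Set Mat} {A : Mat} (h : ∀ s, s < A → s ∈ U) :
    levelIn U A = A.size := by
  have hp : predsIn U A = restM A '' Set.Iio A.size := by
    ext s
    constructor
    · intro hs
      exact ⟨s.size, Mat.size_lt_of_lt hs.2, (eq_restM_of_le hs.2.le).symm⟩
    · rintro ⟨n, hn, rfl⟩
      have hlt : restM A n < A := by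
        refine lt_of_le_of_ne (restM_le (le_of_lt hn)) (fun he => ?_)
        have h2 : n = A.size := congrArg Mat.size he
        exact absurd h2 (Nat.ne_of_lt hn)
      exact ⟨h _ hlt, hlt⟩
  rw [levelIn, hp, Set.ncard_image_of_injOn, ncard_Iio]
  intro a _ b _ hab
  have := congrArg Mat.size hab
  simpa using this

theorem matExtend_size (A : Mat) (v : Vec) : (matExtend A v).size = A.size + 1 := rfl

theorem matExtend_entry_lt (A : Mat) (v : Vec) {i : ℕ} (j : ℕ) (hi : i < A.size) :
    (matExtend A v).entry i j = A.entry i j := if_pos hi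

theorem matExtend_entry_last (A : Mat) (v : Vec) {j : ℕ} (hj : j < A.size) :
    (matExtend A v).entry A.size j = v.entry j := by
  show (if A.size < A.size then A.entry A.size j
      else if A.size = A.size ∧ j < A.size then v.entry j else false) = v.entry j
  rw [if_neg (lt_irrefl _), if_pos ⟨rfl, hj⟩]

theorem lt_matExtend (A : Mat) (v : Vec) : A < matExtend A v := by
  refine lt_of_le_of_ne ⟨Nat.le_succ _, fun i j hi _ => (matExtend_entry_lt A v j hi).symm⟩
    (fun he => ?_)
  have := congrArg Mat.size he
  simp [matExtend] at this

theorem matExtend_immSucc (A : Mat) (v : Vec) :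
    IsImmSuccIn (Set.univ : Set Mat) A (matExtend A v) := by
  refine ⟨trivial, trivial, lt_matExtend A v, fun u _ hAu hut => ?_⟩
  have h1 := Mat.size_lt_of_lt hAu
  have h2 := Mat.size_lt_of_lt hut
  have : (matExtend A v).size = A.size + 1 := rfl
  omega

end ConcreteLemmas

section ValTreeLemmas

theorem levelIn_univ_vec (v : Vec) : levelIn (Set.univ : Set Vec) v = v.len :=
  levelIn_vec (fun _ _ => trivial)

theorem levelIn_univ_mat (A : Mat) : levelIn (Set.univ : Set Mat) A = A.size :=
  levelIn_mat (fun _ _ => trivial)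

theorem strong_props {α : Type*} [PartialOrder α] {S : Set α}
    (h : IsStrongSubtreeOf Set.univ S) (hne : S.Nonempty) :
    IsRootedIn S ∧ IsBalanced S ∧
      (∀ s ∈ S, ∀ t ∈ S, levelIn S s = levelIn S t →
        levelIn Set.univ s = levelIn Set.univ t) ∧
      (∀ s ∈ S, ¬ IsMaximalIn S s → ∀ t, IsImmSuccIn Set.univ s t →
        ∃! c, IsImmSuccIn S s c ∧ t ≤ c) := by
  rcases h.2 with he | hp
  · rw [he] at hne
    exact absurd hne (Set.not_nonempty_empty)
  · exact hp

theorem root_level {α : Type*} [PartialOrder α] {S : Set α} {r : α}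
    (hroot : ∀ t ∈ S, r ≤ t) : levelIn S r = 0 := by
  have : predsIn S r = ∅ := by
    ext x
    simp only [Set.mem_empty_iff_false, iff_false]
    intro hx
    exact absurd (hroot x hx.1) (not_le_of_gt hx.2)
  show (predsIn S r).ncard = 0
  rw [this, Set.ncard_empty]

variable {S₁ : Set Vec} {S₂ : Set Mat}

theorem InVal.mem_S₂ {C : Mat} (h : InVal S₁ S₂ C) : C ∈ S₂ := by
  induction h with
  | root A hA _ => exact hA
  | step A v C _ _ _ hC _ _ => exact hC.1.2.1

theorem InVal.down {C : Mat} (h : InVal S₁ S₂ C) :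
    ∀ D ∈ S₂, D < C → InVal S₁ S₂ D := by
  induction h with
  | root A hA hroot =>
    intro D hD hDC
    exact absurd (hroot D hD) (not_le_of_gt hDC)
  | step A v C hA _ _ hC _ IH =>
    intro D hD hDC
    rcases mat_hlin C D A hDC hC.1.2.2.1 with h' | h'
    · rcases h'.lt_or_eq with h' | h'
      · exact IH D hD h'
      · rw [h']; exact hA
    · rcases h'.lt_or_eq with h' | h'
      · exact absurd hDC (hC.1.2.2.2 D hD h')
      · rw [← h']; exact hA

theorem levelIn_valSet_eq {C : Mat} (hC : InVal S₁ S₂ C) :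
    levelIn {X | InVal S₁ S₂ X} C = levelIn S₂ C := by
  have hp : predsIn {X | InVal S₁ S₂ X} C = predsIn S₂ C := by
    ext x
    exact ⟨fun hx => ⟨hx.1.mem_S₂, hx.2⟩, fun hx => ⟨hC.down x hx.1 hx.2, hx.2⟩⟩
  show (predsIn _ C).ncard = (predsIn S₂ C).ncard
  rw [hp]

theorem InVal.inversion {C : Mat} (hC : InVal S₁ S₂ C) {n : ℕ}
    (hn : levelIn S₂ C = n + 1) :
    ∃ A v, InVal S₁ S₂ A ∧ levelIn S₂ A = n ∧ v ∈ S₁ ∧ levelIn S₁ v = n ∧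
      IsImmSuccIn S₂ A C ∧ matExtend A v ≤ C ∧
      ∀ C', IsImmSuccIn S₂ A C' ∧ matExtend A v ≤ C' → C' = C := by
  cases hC with
  | root A hA hroot =>
    rw [root_level hroot] at hn
    omega
  | step A v C' hA hv hlev hCim huniq =>
    have hlA := isImmSucc_level mat_hlin mat_hfin hCim.1
    have hA' : levelIn S₂ A = n := by omega
    exact ⟨A, v, hA, hA', hv, by rw [hlev, hA'], hCim.1, hCim.2, huniq⟩

theorem len_eq_size_of_level (hP : IsVecStrongPair S₁ S₂) :
    ∀ n, ∀ v ∈ S₁, levelIn S₁ v = n → ∀ A ∈ S₂, levelIn S₂ A = n → v.len = A.size := by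
  obtain ⟨hS₁, hS₂, hLS⟩ := hP
  intro n
  induction n using Nat.strong_induction_on with
  | _ n IH =>
    intro v hv hlv A hA hlA
    obtain ⟨-, -, hcomp₁, -⟩ := strong_props hS₁ ⟨v, hv⟩
    obtain ⟨-, -, hcomp₂, -⟩ := strong_props hS₂ ⟨A, hA⟩
    rcases lt_trichotomy v.len A.size with hc | hc | hc
    · -- v.len < A.size : find B ∈ S₂ with B.size = v.len
      have hmem : v.len ∈ levelSetIn Set.univ S₂ := by
        rw [← hLS]
        exact ⟨v, hv, levelIn_univ_vec v⟩
      obtain ⟨B, hB, hBlen⟩ := hmem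
      rw [levelIn_univ_mat] at hBlen
      rcases lt_or_ge (levelIn S₂ B) n with hj | hj
      · obtain ⟨u, hu, huv, hlu⟩ :=
          exists_pred_at vec_hlin vec_hfin S₁ n v hv hlv (levelIn S₂ B) hj
        have := IH (levelIn S₂ B) hj u hu hlu B hB rfl
        have := Vec.len_lt_of_lt huv
        omega
      · -- B has a pred-or-self at level n, of size ≤ B.size and = A.size
        have : ∃ B' ∈ S₂, B' ≤ B ∧ levelIn S₂ B' = n := by
          rcases hj.lt_or_eq with hj' | hj'
          · obtain ⟨B', hB', hBB, hl⟩ :=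
              exists_pred_at mat_hlin mat_hfin S₂ _ B hB rfl n hj'
            exact ⟨B', hB', hBB.le, hl⟩
          · exact ⟨B, hB, le_rfl, hj'.symm⟩
        obtain ⟨B', hB', hBB, hl⟩ := this
        have h1 : levelIn Set.univ B' = levelIn Set.univ A :=
          hcomp₂ B' hB' A hA (by rw [hl, hlA])
        rw [levelIn_univ_mat, levelIn_univ_mat] at h1
        have h2 : B'.size ≤ B.size := hBB.1
        omega
    · exact hc
    · -- A.size < v.len : find w ∈ S₁ with w.len = A.size
      have hmem : A.size ∈ levelSetIn Set.univ S₁ := by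
        rw [hLS]
        exact ⟨A, hA, levelIn_univ_mat A⟩
      obtain ⟨w, hw, hwlen⟩ := hmem
      rw [levelIn_univ_vec] at hwlen
      rcases lt_or_ge (levelIn S₁ w) n with hj | hj
      · obtain ⟨P, hPm, hPA, hlP⟩ :=
          exists_pred_at mat_hlin mat_hfin S₂ n A hA hlA (levelIn S₁ w) hj
        have := IH (levelIn S₁ w) hj w hw rfl P hPm hlP
        have := Mat.size_lt_of_lt hPA
        omega
      · have : ∃ w' ∈ S₁, w' ≤ w ∧ levelIn S₁ w' = n := by
          rcases hj.lt_or_eq with hj' | hj'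
          · obtain ⟨w', hw', hww, hl⟩ :=
              exists_pred_at vec_hlin vec_hfin S₁ _ w hw rfl n hj'
            exact ⟨w', hw', hww.le, hl⟩
          · exact ⟨w, hw, le_rfl, hj'.symm⟩
        obtain ⟨w', hw', hww, hl⟩ := this
        have h1 : levelIn Set.univ w' = levelIn Set.univ v :=
          hcomp₁ w' hw' v hv (by rw [hl, hlv])
        rw [levelIn_univ_vec, levelIn_univ_vec] at h1
        have h2 : w'.len ≤ w.len := hww.1
        omega

end ValTreeLemmas

section MainLemmas

theorem exists_le_at {α : Type*} [PartialOrder α]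
    (hlin : ∀ t s₁ s₂ : α, s₁ < t → s₂ < t → s₁ ≤ s₂ ∨ s₂ ≤ s₁)
    (hfin : ∀ t : α, {s | s < t}.Finite) {U : Set α} {t : α} (ht : t ∈ U) {m : ℕ}
    (hm : m ≤ levelIn U t) : ∃ s ∈ U, s ≤ t ∧ levelIn U s = m := by
  rcases hm.lt_or_eq with h | h
  · obtain ⟨s, hs, hst, hl⟩ := exists_pred_at hlin hfin U _ t ht rfl m h
    exact ⟨s, hs, hst.le, hl⟩
  · exact ⟨t, ht, le_rfl, h.symm⟩

/-- The valuation tree of the pair `(S₁, S₂)` as a set. -/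
def valSet (S₁ : Set Vec) (S₂ : Set Mat) : Set Mat := {C | InVal S₁ S₂ C}

variable {S₁ : Set Vec} {S₂ : Set Mat}

theorem mem_valSet {C : Mat} : C ∈ valSet S₁ S₂ ↔ InVal S₁ S₂ C := Iff.rfl

theorem levelIn_valSet_eq' {C : Mat} (hC : C ∈ valSet S₁ S₂) :
    levelIn (valSet S₁ S₂) C = levelIn S₂ C := levelIn_valSet_eq hC

/-- The common size of the nodes of the valuation tree at level `n`. -/
noncomputable def NAt (S₁ : Set Vec) (S₂ : Set Mat) (n : ℕ) : ℕ :=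
  if h : ∃ C, C ∈ valSet S₁ S₂ ∧ levelIn (valSet S₁ S₂) C = n then h.choose.size else 0

theorem same_level_size (hP : IsVecStrongPair S₁ S₂) {C C' : Mat}
    (hC : C ∈ valSet S₁ S₂) (hC' : C' ∈ valSet S₁ S₂)
    (hl : levelIn (valSet S₁ S₂) C = levelIn (valSet S₁ S₂) C') : C.size = C'.size := by
  have hCS : C ∈ S₂ := InVal.mem_S₂ hC
  have hCS' : C' ∈ S₂ := InVal.mem_S₂ hC'
  obtain ⟨-, -, hcomp₂, -⟩ := strong_props hP.2.1 ⟨C, hCS⟩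
  have h2 : levelIn S₂ C = levelIn S₂ C' := by
    rw [← levelIn_valSet_eq' hC, ← levelIn_valSet_eq' hC', hl]
  have := hcomp₂ C hCS C' hCS' h2
  rw [levelIn_univ_mat, levelIn_univ_mat] at this
  exact this

theorem size_eq_NAt (hP : IsVecStrongPair S₁ S₂) {C : Mat} {n : ℕ}
    (hC : C ∈ valSet S₁ S₂) (hn : levelIn (valSet S₁ S₂) C = n) :
    C.size = NAt S₁ S₂ n := by
  have hex : ∃ C, C ∈ valSet S₁ S₂ ∧ levelIn (valSet S₁ S₂) C = n := ⟨C, hC, hn⟩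
  rw [NAt, dif_pos hex]
  exact same_level_size hP hC hex.choose_spec.1 (by rw [hn, hex.choose_spec.2])

theorem NAt_lt (hP : IsVecStrongPair S₁ S₂) {C : Mat} {n m : ℕ}
    (hC : C ∈ valSet S₁ S₂) (hn : levelIn (valSet S₁ S₂) C = n) (hm : m < n) :
    NAt S₁ S₂ m < NAt S₁ S₂ n := by
  obtain ⟨D, hD, hDC, hl⟩ := exists_pred_at mat_hlin mat_hfin (valSet S₁ S₂) n C hC hn m hm
  rw [← size_eq_NAt hP hD hl, ← size_eq_NAt hP hC hn]
  exact Mat.size_lt_of_lt hDC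

theorem len_eq_NAt (hP : IsVecStrongPair S₁ S₂) {u : Vec} {D : Mat} {j : ℕ}
    (hu : u ∈ S₁) (hlu : levelIn S₁ u = j)
    (hD : D ∈ valSet S₁ S₂) (hlD : levelIn (valSet S₁ S₂) D = j) :
    u.len = NAt S₁ S₂ j := by
  have h1 : levelIn S₂ D = j := by rw [← levelIn_valSet_eq' hD]; exact hlD
  have h2 := len_eq_size_of_level hP j u hu hlu D (InVal.mem_S₂ hD) h1
  rw [h2]
  exact size_eq_NAt hP hD hlD

/-- Length of an `S₁` node strictly below another node's level. -/
theorem len_lt_of_level_lt (hP : IsVecStrongPair S₁ S₂) {u w : Vec}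
    (hu : u ∈ S₁) (hw : w ∈ S₁) (hl : levelIn S₁ u < levelIn S₁ w) : u.len < w.len := by
  obtain ⟨-, -, hcomp₁, -⟩ := strong_props hP.1 ⟨u, hu⟩
  obtain ⟨u', hu', hu'w, hlu'⟩ :=
    exists_pred_at vec_hlin vec_hfin S₁ _ w hw rfl (levelIn S₁ u) hl
  have h1 := hcomp₁ u hu u' hu' (by rw [hlu'])
  rw [levelIn_univ_vec, levelIn_univ_vec] at h1
  have := Vec.len_lt_of_lt hu'w
  omega

theorem len_eq_of_level_eq (hP : IsVecStrongPair S₁ S₂) {u w : Vec}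
    (hu : u ∈ S₁) (hw : w ∈ S₁) (hl : levelIn S₁ u = levelIn S₁ w) : u.len = w.len := by
  obtain ⟨-, -, hcomp₁, -⟩ := strong_props hP.1 ⟨u, hu⟩
  have h1 := hcomp₁ u hu w hw hl
  rw [levelIn_univ_vec, levelIn_univ_vec] at h1
  exact h1

theorem S1_uniq (hP : IsVecStrongPair S₁ S₂) :
    ∀ n, ∀ v ∈ S₁, levelIn S₁ v = n → ∀ w ∈ S₁, levelIn S₁ w = n →
      (∀ j < n, ∀ u ∈ S₁, levelIn S₁ u = j → v.entry u.len = w.entry u.len) → v = w := by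
  intro n
  induction n with
  | zero =>
    intro v hv hlv w hw hlw _
    obtain ⟨⟨r, hr, hroot⟩, -, -, -⟩ := strong_props hP.1 ⟨v, hv⟩
    have h1 : v = r := by
      rcases (hroot v hv).lt_or_eq with h | h
      · have := levelIn_lt_of_lt vec_hfin hr h
        omega
      · exact h.symm
    have h2 : w = r := by
      rcases (hroot w hw).lt_or_eq with h | h
      · have := levelIn_lt_of_lt vec_hfin hr h
        omega
      · exact h.symm
    rw [h1, h2]
  | succ n IH =>
    intro v hv hlv w hw hlw hbits
    obtain ⟨-, -, -, hbr₁⟩ := strong_props hP.1 ⟨v, hv⟩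
    obtain ⟨v', hv', hv'v, hlv'⟩ := exists_pred_at vec_hlin vec_hfin S₁ _ v hv hlv n (by omega)
    obtain ⟨w', hw', hw'w, hlw'⟩ := exists_pred_at vec_hlin vec_hfin S₁ _ w hw hlw n (by omega)
    have hbits' : ∀ j < n, ∀ u ∈ S₁, levelIn S₁ u = j → v'.entry u.len = w'.entry u.len := by
      intro j hj u hu hlu
      have hulen₁ : u.len < v'.len :=
        len_lt_of_level_lt hP hu hv' (by omega)
      have hulen₂ : u.len < w'.len :=
        len_lt_of_level_lt hP hu hw' (by omega)
      rw [hv'v.le.2 u.len hulen₁, hw'w.le.2 u.len hulen₂]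
      exact hbits j (by omega) u hu hlu
    have heq : v' = w' := IH v' hv' hlv' w' hw' hlw' hbits'
    subst heq
    -- v and w are both the unique immediate successor of v' above `vecExtend v' b`
    have hnm : ¬ IsMaximalIn S₁ v' := (notMaximalIn_iff hv').mpr ⟨v, hv, hv'v⟩
    have hEU := hbr₁ v' hv' hnm (vecExtend v' (v.entry v'.len)) (vecExtend_immSucc v' _)
    have hvimm : IsImmSuccIn S₁ v' v :=
      isImmSucc_of_level vec_hfin hv' hv hv'v (by omega)
    have hwimm : IsImmSuccIn S₁ v' w :=
      isImmSucc_of_level vec_hfin hv' hw hw'w (by omega)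
    have hvlen : v'.len < v.len := Vec.len_lt_of_lt hv'v
    have hwlen : v'.len < w.len := Vec.len_lt_of_lt hw'w
    have hbit : v.entry v'.len = w.entry v'.len := hbits n (by omega) v' hv' hlv'
    have h1 : vecExtend v' (v.entry v'.len) ≤ v := vecExtend_le_of_le hv'v.le hvlen
    have h2 : vecExtend v' (v.entry v'.len) ≤ w := by
      rw [hbit]
      exact vecExtend_le_of_le hw'w.le hwlen
    have hu1 := hEU.unique ⟨hvimm, h1⟩ ⟨hwimm, h2⟩
    exact hu1

theorem S1_exists (hP : IsVecStrongPair S₁ S₂) {n : ℕ} {x : Vec}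
    (hx : x ∈ S₁) (hlx : levelIn S₁ x = n) (bits : ℕ → Bool) :
    ∃ v ∈ S₁, levelIn S₁ v = n ∧
      ∀ j < n, ∀ u ∈ S₁, levelIn S₁ u = j → v.entry u.len = bits j := by
  obtain ⟨⟨r, hr, hroot⟩, hbal₁, -, hbr₁⟩ := strong_props hP.1 ⟨x, hx⟩
  suffices h : ∀ l ≤ n, ∃ v ∈ S₁, levelIn S₁ v = l ∧
      ∀ j < l, ∀ u ∈ S₁, levelIn S₁ u = j → v.entry u.len = bits j by
    exact h n le_rfl
  intro l
  induction l with
  | zero =>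
    intro _
    exact ⟨r, hr, root_level hroot, by omega⟩
  | succ l IH =>
    intro hln
    obtain ⟨v, hv, hlv, hbits⟩ := IH (by omega)
    -- v is not maximal in S₁
    obtain ⟨xl, hxl, hxlx, hlxl⟩ :=
      exists_pred_at vec_hlin vec_hfin S₁ n x hx hlx l (by omega)
    have hxlnm : ¬ IsMaximalIn S₁ xl := (notMaximalIn_iff hxl).mpr ⟨x, hx, hxlx⟩
    have hnm : ¬ IsMaximalIn S₁ v :=
      nonmax_of_same_level vec_hfin hbal₁ hv hxl (by omega) hxlnm
    obtain ⟨c, ⟨hcimm, hcext⟩, -⟩ := hbr₁ v hv hnm (vecExtend v (bits l)) (vecExtend_immSucc v _)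
    refine ⟨c, hcimm.2.1, ?_, ?_⟩
    · rw [isImmSucc_level vec_hlin vec_hfin hcimm, hlv]
    · intro j hj u hu hlu
      rcases Nat.lt_or_ge j l with hjl | hjl
      · have hulen : u.len < v.len := len_lt_of_level_lt hP hu hv (by omega)
        rw [← hcimm.2.2.1.le.2 u.len hulen]
        exact hbits j hjl u hu hlu
      · have hjl' : j = l := by omega
        subst hjl'
        have hulen : u.len = v.len := len_eq_of_level_eq hP hu hv (by omega)
        rw [hulen, ← hcext.2 v.len (by exact Nat.lt_succ_self _), vecExtend_entry_last]

end MainLemmas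

section EXU

variable {S₁ : Set Vec} {S₂ : Set Mat}

theorem exists_unique_at_level (hP : IsVecStrongPair S₁ S₂) :
    ∀ n, (∃ D ∈ valSet S₁ S₂, levelIn (valSet S₁ S₂) D = n) → ∀ B : Mat, B.size = n →
      ∃! C, C ∈ valSet S₁ S₂ ∧ levelIn (valSet S₁ S₂) C = n ∧
        ∀ l j, j < l → l < n → C.entry (NAt S₁ S₂ l) (NAt S₁ S₂ j) = B.entry l j := by
  intro n
  induction n with
  | zero =>
    rintro ⟨D, hD, hlD⟩ B hB
    refine ⟨D, ⟨hD, hlD, by omega⟩, ?_⟩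
    rintro C ⟨hC, hlC, -⟩
    obtain ⟨⟨r, hr, hroot⟩, -, -, -⟩ := strong_props hP.2.1 ⟨D, InVal.mem_S₂ hD⟩
    have key : ∀ X, X ∈ valSet S₁ S₂ → levelIn (valSet S₁ S₂) X = 0 → X = r := by
      intro X hX hlX
      rcases (hroot X (InVal.mem_S₂ hX)).lt_or_eq with h | h
      · have h2 := levelIn_lt_of_lt mat_hfin hr h
        rw [levelIn_valSet_eq' hX] at hlX
        omega
      · exact h.symm
    rw [key C hC hlC, key D hD hlD]
  | succ n IH =>
    rintro ⟨D, hD, hlD⟩ B hB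
    obtain ⟨D', hD', hD'D, hlD'⟩ :=
      exists_pred_at mat_hlin mat_hfin (valSet S₁ S₂) (n + 1) D hD hlD n (by omega)
    obtain ⟨A, ⟨hA, hlA, hAbits⟩, hAuniq⟩ := IH ⟨D', hD', hlD'⟩ (restM B n) rfl
    have hlDS₂ : levelIn S₂ D = n + 1 := by rw [← levelIn_valSet_eq' hD]; exact hlD
    obtain ⟨AD, vD, -, -, hvD, hlvD, -, -, -⟩ := InVal.inversion hD hlDS₂
    obtain ⟨v, hv, hlv, hvbits⟩ := S1_exists hP hvD hlvD (fun j => B.entry n j)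
    have hvNAt : ∀ j < n, v.entry (NAt S₁ S₂ j) = B.entry n j := by
      intro j hj
      obtain ⟨u, hu, -, hlu⟩ := exists_pred_at vec_hlin vec_hfin S₁ n v hv hlv j hj
      obtain ⟨Dj, hDj, -, hlDj⟩ :=
        exists_pred_at mat_hlin mat_hfin (valSet S₁ S₂) (n + 1) D hD hlD j (by omega)
      rw [← len_eq_NAt hP hu hlu hDj hlDj]
      exact hvbits j hj u hu hlu
    have hAS₂ : levelIn S₂ A = n := by rw [← levelIn_valSet_eq' hA]; exact hlA
    have hAsize : A.size = NAt S₁ S₂ n := size_eq_NAt hP hA hlA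
    have hvlen : v.len = A.size :=
      len_eq_size_of_level hP n v hv hlv A (InVal.mem_S₂ hA) hAS₂
    obtain ⟨-, hbal₂, -, hbr₂⟩ := strong_props hP.2.1 ⟨A, InVal.mem_S₂ hA⟩
    have hD'nm : ¬ IsMaximalIn S₂ D' :=
      (notMaximalIn_iff (InVal.mem_S₂ hD')).mpr ⟨D, InVal.mem_S₂ hD, hD'D⟩
    have hlevS₂ : levelIn S₂ A = levelIn S₂ D' := by
      rw [hAS₂, ← levelIn_valSet_eq' hD', hlD']
    have hAnm : ¬ IsMaximalIn S₂ A :=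
      nonmax_of_same_level mat_hfin hbal₂ (InVal.mem_S₂ hA) (InVal.mem_S₂ hD') hlevS₂ hD'nm
    obtain ⟨C, ⟨hCimm, hCext⟩, hCuniq⟩ :=
      hbr₂ A (InVal.mem_S₂ hA) hAnm (matExtend A v) (matExtend_immSucc A v)
    have hCval : C ∈ valSet S₁ S₂ :=
      InVal.step A v C hA hv (by rw [hlv, hAS₂]) ⟨hCimm, hCext⟩ (fun C' h' => hCuniq C' h')
    have hlC : levelIn (valSet S₁ S₂) C = n + 1 := by
      rw [levelIn_valSet_eq' hCval, isImmSucc_level mat_hlin mat_hfin hCimm, hAS₂]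
    have hCbits : ∀ l j, j < l → l < n + 1 →
        C.entry (NAt S₁ S₂ l) (NAt S₁ S₂ j) = B.entry l j := by
      intro l j hjl hl
      rcases Nat.lt_or_ge l n with hln | hln
      · have h1 : NAt S₁ S₂ l < A.size := by rw [hAsize]; exact NAt_lt hP hA hlA hln
        rw [← Mat.entry_eq_of_le hCimm.2.2.1.le h1, hAbits l j hjl hln, restM_entry B j hln]
      · have hln' : l = n := by omega
        rw [hln'] at hjl ⊢
        have hj' : NAt S₁ S₂ j < A.size := by rw [hAsize]; exact NAt_lt hP hA hlA hjl
        calc C.entry (NAt S₁ S₂ n) (NAt S₁ S₂ j)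
            = C.entry A.size (NAt S₁ S₂ j) := by rw [hAsize]
          _ = (matExtend A v).entry A.size (NAt S₁ S₂ j) :=
              (Mat.entry_eq_of_le hCext (by rw [matExtend_size]; omega)).symm
          _ = v.entry (NAt S₁ S₂ j) := matExtend_entry_last A v hj'
          _ = B.entry n j := hvNAt j hjl
    refine ⟨C, ⟨hCval, hlC, hCbits⟩, ?_⟩
    rintro C' ⟨hC', hlC', hC'bits⟩
    have hlC'S₂ : levelIn S₂ C' = n + 1 := by rw [← levelIn_valSet_eq' hC']; exact hlC'
    obtain ⟨A', v', hA'val, hlA'S₂, hv', hlv', hA'imm, hA'ext, hC'uniq⟩ :=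
      InVal.inversion hC' hlC'S₂
    have hA'val' : A' ∈ valSet S₁ S₂ := hA'val
    have hlA' : levelIn (valSet S₁ S₂) A' = n := by rw [levelIn_valSet_eq' hA'val', hlA'S₂]
    have hA'size : A'.size = NAt S₁ S₂ n := size_eq_NAt hP hA'val' hlA'
    have hA'eq : A' = A := by
      apply hAuniq
      refine ⟨hA'val', hlA', ?_⟩
      intro l j hjl hln
      have h1 : NAt S₁ S₂ l < A'.size := by rw [hA'size]; exact NAt_lt hP hA hlA hln
      rw [Mat.entry_eq_of_le hA'imm.2.2.1.le h1, hC'bits l j hjl (by omega),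
        restM_entry B j hln]
    subst hA'eq
    have hveq : v' = v := by
      apply S1_uniq hP n v' hv' hlv' v hv hlv
      intro j hj u hu hlu
      obtain ⟨Dj, hDj, -, hlDj⟩ :=
        exists_pred_at mat_hlin mat_hfin (valSet S₁ S₂) (n + 1) D hD hlD j (by omega)
      have hulen : u.len = NAt S₁ S₂ j := len_eq_NAt hP hu hlu hDj hlDj
      rw [hulen, hvNAt j hj]
      have hNj : NAt S₁ S₂ j < A'.size := by rw [hA'size]; exact NAt_lt hP hA hlA hj
      calc v'.entry (NAt S₁ S₂ j)
          = (matExtend A' v').entry A'.size (NAt S₁ S₂ j) :=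
            (matExtend_entry_last A' v' hNj).symm
        _ = C'.entry A'.size (NAt S₁ S₂ j) :=
            Mat.entry_eq_of_le hA'ext (by rw [matExtend_size]; omega)
        _ = C'.entry (NAt S₁ S₂ n) (NAt S₁ S₂ j) := by rw [hA'size]
        _ = B.entry n j := hC'bits n j hj (by omega)
    subst hveq
    exact (hC'uniq C ⟨hCimm, hCext⟩).symm
end EXU

section FinalConstruction

/-- The structural isomorphism: `theF S₁ S₂ B` is the unique node of the valuation tree
at level `B.size` whose passing numbers are prescribed by `B`. -/
noncomputable def theF (S₁ : Set Vec) (S₂ : Set Mat) (B : Mat) : Mat :=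
  if h : ∃! C, C ∈ valSet S₁ S₂ ∧ levelIn (valSet S₁ S₂) C = B.size ∧
      ∀ l j, j < l → l < B.size → C.entry (NAt S₁ S₂ l) (NAt S₁ S₂ j) = B.entry l j
  then h.exists.choose else B

theorem theF_spec (S₁ : Set Vec) (S₂ : Set Mat) (B : Mat)
    (h : ∃! C, C ∈ valSet S₁ S₂ ∧ levelIn (valSet S₁ S₂) C = B.size ∧
      ∀ l j, j < l → l < B.size → C.entry (NAt S₁ S₂ l) (NAt S₁ S₂ j) = B.entry l j) :
    theF S₁ S₂ B ∈ valSet S₁ S₂ ∧ levelIn (valSet S₁ S₂) (theF S₁ S₂ B) = B.size ∧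
      ∀ l j, j < l → l < B.size →
        (theF S₁ S₂ B).entry (NAt S₁ S₂ l) (NAt S₁ S₂ j) = B.entry l j := by
  simp only [theF]
  rw [dif_pos h]
  exact h.exists.choose_spec

theorem main_aux {S₁ : Set Vec} {S₂ : Set Mat} (hP : IsVecStrongPair S₁ S₂) (k : ℕ∞)
    (hht : heightIn (valSet S₁ S₂) = k) :
    ∃ f : Mat → Mat, IsStructIso {A : Mat | (A.size : ℕ∞) < k} (valSet S₁ S₂) f ∧
      ∀ g : Mat → Mat, IsStructIso {A : Mat | (A.size : ℕ∞) < k} (valSet S₁ S₂) g →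
        ∀ A : Mat, (A.size : ℕ∞) < k → g A = theF S₁ S₂ A := by
  have hwit : ∀ n : ℕ, (n : ℕ∞) < k → ∃ D ∈ valSet S₁ S₂, levelIn (valSet S₁ S₂) D = n := by
    intro n hn
    exact exists_at_level_of_lt_height mat_hlin mat_hfin (by rw [hht]; exact hn)
  have hEXU : ∀ B : Mat, (B.size : ℕ∞) < k → ∃! C, C ∈ valSet S₁ S₂ ∧
      levelIn (valSet S₁ S₂) C = B.size ∧ ∀ l j, j < l → l < B.size →
        C.entry (NAt S₁ S₂ l) (NAt S₁ S₂ j) = B.entry l j :=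
    fun B hB => exists_unique_at_level hP B.size (hwit B.size hB) B rfl
  have hfspec := fun (B : Mat) (hB : (B.size : ℕ∞) < k) => theF_spec S₁ S₂ B (hEXU B hB)
  have hfuniq : ∀ (B : Mat), (B.size : ℕ∞) < k → ∀ (C : Mat),
      C ∈ valSet S₁ S₂ → levelIn (valSet S₁ S₂) C = B.size →
      (∀ l j, j < l → l < B.size → C.entry (NAt S₁ S₂ l) (NAt S₁ S₂ j) = B.entry l j) →
      C = theF S₁ S₂ B :=
    fun B hB C h1 h2 h3 => (hEXU B hB).unique ⟨h1, h2, h3⟩ (theF_spec S₁ S₂ B (hEXU B hB))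
  have hdomlevel : ∀ A : Mat, (A.size : ℕ∞) < k →
      levelIn {X : Mat | (X.size : ℕ∞) < k} A = A.size := by
    intro A hA
    apply levelIn_mat
    intro s hs
    have h1 : s.size < A.size := Mat.size_lt_of_lt hs
    have h2 : (s.size : ℕ∞) < (A.size : ℕ∞) := by exact_mod_cast h1
    exact lt_trans h2 hA
  refine ⟨theF S₁ S₂, ⟨?_, ?_, ?_, ?_, ?_, ?_⟩, ?_⟩
  · -- mapsTo
    intro A hA
    exact (hfspec A hA).1
  · -- injOn
    intro A hA B hB heq
    have hA1 := (hfspec A hA).2.1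
    have hB1 := (hfspec B hB).2.1
    rw [heq] at hA1
    have hsize : A.size = B.size := by rw [← hA1, hB1]
    refine Mat.ext' hsize ?_
    intro i j hj hi
    have h2 := (hfspec A hA).2.2 i j hj hi
    have h3 := (hfspec B hB).2.2 i j hj (by omega)
    rw [heq] at h2
    rw [← h2, h3]
  · -- surjOn
    intro C hC
    have hnk : ((levelIn (valSet S₁ S₂) C : ℕ) : ℕ∞) < k := by
      have h1 := level_add_one_le_height hC
      rw [hht] at h1
      have h2 : ((levelIn (valSet S₁ S₂) C : ℕ) : ℕ∞) <
          ((levelIn (valSet S₁ S₂) C : ℕ) : ℕ∞) + 1 := by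
        exact_mod_cast Nat.lt_succ_self _
      exact lt_of_lt_of_le h2 h1
    refine ⟨⟨levelIn (valSet S₁ S₂) C,
      fun i j => if j < i ∧ i < levelIn (valSet S₁ S₂) C
        then C.entry (NAt S₁ S₂ i) (NAt S₁ S₂ j) else false,
      fun i j hij => if_neg (fun hcon => absurd hcon.1 (by omega)),
      fun i j hi => if_neg (fun hcon => absurd hcon.2 (by omega))⟩, hnk, ?_⟩
    refine (hfuniq _ hnk C hC rfl ?_).symm
    intro l j hjl hl
    show C.entry (NAt S₁ S₂ l) (NAt S₁ S₂ j) =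
      if j < l ∧ l < levelIn (valSet S₁ S₂) C then C.entry (NAt S₁ S₂ l) (NAt S₁ S₂ j)
      else false
    rw [if_pos ⟨hjl, hl⟩]
  · -- orderIso
    intro A hA B hB
    constructor
    · intro hAB
      have hsz : A.size ≤ B.size := hAB.1
      obtain ⟨D, hD, hDle, hlD⟩ := exists_le_at mat_hlin mat_hfin (hfspec B hB).1
        (m := A.size) (by rw [(hfspec B hB).2.1]; exact hsz)
      have hfA : D = theF S₁ S₂ A := by
        apply hfuniq A hA D hD hlD
        intro l j hjl hl
        have hDsize : D.size = NAt S₁ S₂ A.size := size_eq_NAt hP hD hlD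
        have h1 : NAt S₁ S₂ l < D.size := by rw [hDsize]; exact NAt_lt hP hD hlD hl
        rw [Mat.entry_eq_of_le hDle h1, (hfspec B hB).2.2 l j hjl (by omega)]
        exact (hAB.2 l j hl (by omega)).symm
      rw [← hfA]
      exact hDle
    · intro hfAB
      have hszf : A.size ≤ B.size := by
        have h1 := levelIn_le_of_le mat_hfin (hfspec A hA).1 hfAB
        rw [(hfspec A hA).2.1, (hfspec B hB).2.1] at h1
        exact h1
      refine ⟨hszf, ?_⟩
      intro i j hi hj
      rcases Nat.lt_or_ge j i with hji | hji
      · have hfAsize : (theF S₁ S₂ A).size = NAt S₁ S₂ A.size :=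
          size_eq_NAt hP (hfspec A hA).1 (hfspec A hA).2.1
        have h1 : NAt S₁ S₂ i < (theF S₁ S₂ A).size := by
          rw [hfAsize]
          exact NAt_lt hP (hfspec A hA).1 (hfspec A hA).2.1 hi
        rw [← (hfspec A hA).2.2 i j hji hi, Mat.entry_eq_of_le hfAB h1,
          (hfspec B hB).2.2 i j hji (by omega)]
      · rw [A.lower i j hji, B.lower i j hji]
  · -- levelEq
    intro A hA
    rw [hdomlevel A hA, (hfspec A hA).2.1]
  · -- passing
    intro A hA B hB C hC hab hbc
    have hfB : (theF S₁ S₂ B).size = NAt S₁ S₂ B.size :=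
      size_eq_NAt hP (hfspec B hB).1 (hfspec B hB).2.1
    have hfA : (theF S₁ S₂ A).size = NAt S₁ S₂ A.size :=
      size_eq_NAt hP (hfspec A hA).1 (hfspec A hA).2.1
    rw [hfB, hfA]
    rcases hab.lt_or_eq with h | h
    · exact (hfspec C hC).2.2 B.size A.size h hbc
    · rw [← h, (theF S₁ S₂ C).lower _ _ le_rfl, C.lower _ _ le_rfl]
  · -- uniqueness
    intro g hg A hA
    refine hfuniq A hA (g A) (hg.mapsTo A hA) ?_ ?_
    · have h1 := hg.levelEq A hA
      rw [hdomlevel A hA] at h1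
      exact h1.symm
    · intro l j hjl hl
      have hjk : ((restM A j).size : ℕ∞) < k := by
        have h1 : ((j : ℕ) : ℕ∞) < ((A.size : ℕ) : ℕ∞) := by exact_mod_cast (by omega : j < A.size)
        exact lt_trans h1 hA
      have hlk : ((restM A l).size : ℕ∞) < k := by
        have h1 : ((l : ℕ) : ℕ∞) < ((A.size : ℕ) : ℕ∞) := by exact_mod_cast hl
        exact lt_trans h1 hA
      have h2 := hg.passing (restM A j) hjk (restM A l) hlk A hA
        (show j ≤ l from by omega) (show l < A.size from hl)
      have hgl₁ : g (restM A l) ∈ valSet S₁ S₂ := hg.mapsTo _ hlk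
      have hgl₂ : levelIn (valSet S₁ S₂) (g (restM A l)) = l := by
        have h3 := hg.levelEq _ hlk
        rw [hdomlevel _ hlk] at h3
        exact h3.symm
      have hgj₁ : g (restM A j) ∈ valSet S₁ S₂ := hg.mapsTo _ hjk
      have hgj₂ : levelIn (valSet S₁ S₂) (g (restM A j)) = j := by
        have h3 := hg.levelEq _ hjk
        rw [hdomlevel _ hjk] at h3
        exact h3.symm
      have hsl : (g (restM A l)).size = NAt S₁ S₂ l := size_eq_NAt hP hgl₁ hgl₂
      have hsj : (g (restM A j)).size = NAt S₁ S₂ j := size_eq_NAt hP hgj₁ hgj₂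
      rw [← hsl, ← hsj]
      exact h2

end FinalConstruction
/-- For every `k ∈ ω + 1` and every valuation tree `T ⊆ T₂` of height `k`, there is a
unique structural isomorphism `f : T₂(<k) → T`, where `T₂(<k)` is the set of nodes of
`T₂` of level (= number of rows) less than `k`. -/
theorem valuation_tree_unique_structural_iso (k : ℕ∞) (T : Set Mat)
    (hT : IsValTree T) (hht : heightIn T = k) :
    ∃ f : Mat → Mat, IsStructIso {A : Mat | (A.size : ℕ∞) < k} T f ∧
      ∀ g : Mat → Mat, IsStructIso {A : Mat | (A.size : ℕ∞) < k} T g →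
        ∀ A : Mat, (A.size : ℕ∞) < k → g A = f A := by
  obtain ⟨S₁, S₂, hP, rfl⟩ := hT
  obtain ⟨f, hf, huniq⟩ := main_aux hP k hht
  exact ⟨f, hf, fun g hg A hA => by rw [huniq g hg A hA, ← huniq f hf A hA]⟩
end
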